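/- arXiv:2605.00407 — 4 statements merged into one kernel-verified Lean document; each statement's English description precedes it below -/
import Mathlib

section
/- Let γ ∈ (1,3), μ ∈ [1/2,1), and i ≥ 2, and set g_i = μ + i - 1 - (3-γ)iμ/(γ+1), k_i = i - 1 - iμ. For any nonnegative integers ℓ₂,…,ℓ_{i-1} with Σ_{m=2}^{i-1} ℓ_m(m-1) = i-1, the following nonresonance relations hold: g_i - Σ ℓ_m g_m = μ·(2(γ-1)/(γ+1))·(1 - Σ ℓ_m) ≠ 0 and k_i - Σ ℓ_m g_m = -μ - (2(γ-1)/(γ+1))·μ·Σ m·ℓ_m ≠ 0, and moreover g_i - Σ ℓ_m g_m < 0 (i.e., Σ ℓ_m ≥ 2 whenever the constraint holds with i ≥ 3 and some ℓ_m > 0). -/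
/-- nonresonance relations between the coefficients `g_m`, `k_m` under
the combinatorial constraint `∑_{m=2}^{i-1} ℓ_m (m-1) = i-1`. -/
theorem stmt6 (γ μ : ℝ) (hγ : 1 < γ ∧ γ < 3) (hμ : 1/2 ≤ μ ∧ μ < 1)
    (i : ℕ) (hi : 3 ≤ i) (ℓ : ℕ → ℕ)
    (hconstraint : ∑ m ∈ Finset.Icc 2 (i - 1), ℓ m * (m - 1) = i - 1)
    (g k : ℕ → ℝ)
    (hg : ∀ m : ℕ, g m = μ + (m : ℝ) - 1 - (3 - γ) * (m : ℝ) * μ / (γ + 1))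
    (hk : ∀ m : ℕ, k m = (m : ℝ) - 1 - (m : ℝ) * μ) :
    (g i - ∑ m ∈ Finset.Icc 2 (i - 1), (ℓ m : ℝ) * g m
        = μ * (2 * (γ - 1) / (γ + 1)) * (1 - ∑ m ∈ Finset.Icc 2 (i - 1), (ℓ m : ℝ))) ∧
    (g i - ∑ m ∈ Finset.Icc 2 (i - 1), (ℓ m : ℝ) * g m ≠ 0) ∧
    (k i - ∑ m ∈ Finset.Icc 2 (i - 1), (ℓ m : ℝ) * g m
        = -μ - (2 * (γ - 1) / (γ + 1)) * μ * ∑ m ∈ Finset.Icc 2 (i - 1), (m : ℝ) * (ℓ m : ℝ)) ∧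
    (k i - ∑ m ∈ Finset.Icc 2 (i - 1), (ℓ m : ℝ) * g m ≠ 0) ∧
    (g i - ∑ m ∈ Finset.Icc 2 (i - 1), (ℓ m : ℝ) * g m < 0) := by
  obtain ⟨hγ1, hγ3⟩ := hγ
  obtain ⟨hμ1, hμ2⟩ := hμ
  have hγ0 : γ + 1 ≠ 0 := by linarith
  have hμ0 : 0 < μ := by linarith
  set I := Finset.Icc 2 (i - 1) with hI
  set S := ∑ m ∈ I, (ℓ m : ℝ) with hSdef
  set T := ∑ m ∈ I, (m : ℝ) * (ℓ m : ℝ) with hTdef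
  -- S ≥ 2 in ℕ
  have hSnat : 2 ≤ ∑ m ∈ I, ℓ m := by
    by_contra h
    push_neg at h
    have h1 : ∑ m ∈ I, ℓ m ≤ 1 := by omega
    have h2 : i - 1 ≤ (∑ m ∈ I, ℓ m) * (i - 1 - 1) := by
      conv_lhs => rw [← hconstraint]
      rw [Finset.sum_mul]
      apply Finset.sum_le_sum
      intro m hm
      exact Nat.mul_le_mul_left _ (Nat.sub_le_sub_right (Finset.mem_Icc.mp hm).2 1)
    have h3 : (∑ m ∈ I, ℓ m) * (i - 1 - 1) ≤ 1 * (i - 1 - 1) :=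
      Nat.mul_le_mul_right _ h1
    omega
  have hS2 : (2 : ℝ) ≤ S := by
    have : ((∑ m ∈ I, ℓ m : ℕ) : ℝ) = S := by
      rw [hSdef, Nat.cast_sum]
    rw [← this]
    exact_mod_cast hSnat
  have hT0 : 0 ≤ T := by
    rw [hTdef]
    exact Finset.sum_nonneg fun m _ => by positivity
  have hreal : ∑ m ∈ I, (ℓ m : ℝ) * ((m : ℝ) - 1) = (i : ℝ) - 1 := by
    have h4 : ∑ m ∈ I, (ℓ m : ℝ) * ((m : ℝ) - 1)
        = ((∑ m ∈ I, ℓ m * (m - 1) : ℕ) : ℝ) := by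
      rw [Nat.cast_sum]
      apply Finset.sum_congr rfl
      intro m hm
      have h1m : 1 ≤ m := le_trans one_le_two (Finset.mem_Icc.mp hm).1
      rw [Nat.cast_mul, Nat.cast_sub h1m, Nat.cast_one]
    rw [h4, hconstraint, Nat.cast_sub (by omega : 1 ≤ i), Nat.cast_one]
  have hTS : T = S + ((i : ℝ) - 1) := by
    have h5 : ∑ m ∈ I, (ℓ m : ℝ) * ((m : ℝ) - 1) = T - S := by
      rw [hTdef, hSdef, ← Finset.sum_sub_distrib]
      apply Finset.sum_congr rfl
      intro m _
      ring
    rw [hreal] at h5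
    linarith
  have hsum : ∑ m ∈ I, (ℓ m : ℝ) * g m
      = μ * S + ((i : ℝ) - 1) - (3 - γ) * μ / (γ + 1) * T := by
    have hterm : ∀ m ∈ I, (ℓ m : ℝ) * g m
        = μ * (ℓ m : ℝ) + (ℓ m : ℝ) * ((m : ℝ) - 1)
          - (3 - γ) * μ / (γ + 1) * ((m : ℝ) * (ℓ m : ℝ)) := by
      intro m _
      rw [hg m]
      ring
    rw [Finset.sum_congr rfl hterm, Finset.sum_sub_distrib, Finset.sum_add_distrib,
      ← Finset.mul_sum, ← Finset.mul_sum, hreal, ← hSdef, ← hTdef]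
  have hc : 0 < 2 * (γ - 1) / (γ + 1) := by
    apply div_pos <;> linarith
  have eg : g i - ∑ m ∈ I, (ℓ m : ℝ) * g m
      = μ * (2 * (γ - 1) / (γ + 1)) * (1 - S) := by
    rw [hsum, hg i, hTS]
    field_simp
    ring
  have egneg : μ * (2 * (γ - 1) / (γ + 1)) * (1 - S) < 0 := by
    apply mul_neg_of_pos_of_neg
    · positivity
    · linarith
  have ek : k i - ∑ m ∈ I, (ℓ m : ℝ) * g m
      = -μ - 2 * (γ - 1) / (γ + 1) * μ * T := by
    rw [hsum, hk i, hTS]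
    field_simp
    ring
  have ekneg : -μ - 2 * (γ - 1) / (γ + 1) * μ * T < 0 := by
    have : 0 ≤ 2 * (γ - 1) / (γ + 1) * μ * T := by positivity
    linarith
  refine ⟨eg, ?_, ek, ?_, ?_⟩
  · rw [eg]; exact ne_of_lt egneg
  · rw [ek]; exact ne_of_lt ekneg
  · rw [eg]; exact egneg
end

section
/- Let γ ∈ (1,3), μ ∈ [1/2,1), and a ≤ 0. Define for y > 0 the function φ_a(y) = (-z̄(y))^{(1+a)/(1-μ)} / (1 - μ + (-z̄(y))^{μ/(1-μ)}), where z̄ satisfies (y + ((γ+1)/4)z̄)z̄' - (1-μ)z̄ = 0 with z̄ < 0 and the normalization (4μ/(γ+1))y = -z̄ + (-z̄)^{1/(1-μ)}. Then φ_a is an eigenfunction of the linearized operator L φ = (μ - 1 + ((γ+1)/4)z̄')φ + (y + ((γ+1)/4)z̄)φ' with eigenvalue a: L φ_a = a φ_a. -/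
/-- `φ_a` is an eigenfunction of the linearized operator with eigenvalue `a`. -/
theorem stmt15 (γ μ a : ℝ) (hγ : 1 < γ ∧ γ < 3) (hμ : 1/2 ≤ μ ∧ μ < 1) (ha : a ≤ 0)
    (zb : ℝ → ℝ) (hdiff : ∀ y : ℝ, 0 < y → DifferentiableAt ℝ zb y)
    (hneg : ∀ y : ℝ, 0 < y → zb y < 0)
    (hODE : ∀ y : ℝ, 0 < y →
      (y + (γ + 1) / 4 * zb y) * deriv zb y - (1 - μ) * zb y = 0)
    (hnorm : ∀ y : ℝ, 0 < y →
      4 * μ / (γ + 1) * y = -zb y + (-zb y) ^ ((1:ℝ) / (1 - μ)))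
    (φ : ℝ → ℝ)
    (hφ : ∀ y : ℝ,
      φ y = (-zb y) ^ ((1 + a) / (1 - μ)) / (1 - μ + (-zb y) ^ (μ / (1 - μ)))) :
    ∀ y : ℝ, 0 < y →
      (μ - 1) * φ y + (γ + 1) / 4 * deriv zb y * φ y
          + (y + (γ + 1) / 4 * zb y) * deriv φ y
        = a * φ y := by
  obtain ⟨hγ1, hγ3⟩ := hγ
  obtain ⟨hμ1, hμ2⟩ := hμ
  intro y hy
  have hμ0 : (0:ℝ) < μ := by linarith
  have h1μ : (0:ℝ) < 1 - μ := by linarith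
  have hγ0 : (0:ℝ) < γ + 1 := by linarith
  have hODEy := hODE y hy
  have hnormy := hnorm y hy
  set p := (1 + a) / (1 - μ) with hp
  set q := μ / (1 - μ) with hq
  set z' := deriv zb y with hz'
  set D := y + (γ + 1) / 4 * zb y with hD
  set w := -zb y with hw
  have hw0 : 0 < w := by rw [hw]; linarith [hneg y hy]
  set B := w ^ q with hB
  have hB0 : 0 < B := Real.rpow_pos_of_pos hw0 q
  set E := 1 - μ + B with hE
  have hE0 : 0 < E := by positivity
  have hzb : zb y = -w := by rw [hw]; ring
  -- normalization gives D in terms of w, E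
  have hsplit : w ^ ((1:ℝ)/(1-μ)) = B * w := by
    rw [hB, hq, ← Real.rpow_add_one hw0.ne']
    congr 1
    field_simp
    ring
  have hDE : 4 * μ / (γ + 1) * D = w * E := by
    rw [hsplit] at hnormy
    rw [hD, hzb, hE]
    field_simp at hnormy ⊢
    linarith [hnormy]
  have hDv : D = (γ + 1) / (4 * μ) * (w * E) := by
    field_simp at hDE ⊢
    linear_combination hDE
  have hD0 : 0 < D := by rw [hDv]; positivity
  -- ODE gives z'
  have hDz : D * z' = -((1 - μ) * w) := by
    rw [hzb] at hODEy
    linarith [hODEy]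
  -- derivative of φ
  have hdzb : HasDerivAt zb z' y := (hdiff y hy).hasDerivAt
  have hne : -zb y ≠ 0 := by rw [← hw]; exact hw0.ne'
  have hnum : HasDerivAt (fun t => (-zb t) ^ p) (-z' * p * w ^ (p-1)) y := by
    have := (hdzb.neg).rpow_const (p := p) (Or.inl hne)
    simpa [← hw] using this
  have hden : HasDerivAt (fun t => 1 - μ + (-zb t) ^ q) (-z' * q * w ^ (q-1)) y := by
    have := ((hdzb.neg).rpow_const (p := q) (Or.inl hne)).const_add (1 - μ)
    simpa [← hw] using this
  have hφfun : φ = fun t => (-zb t) ^ p / (1 - μ + (-zb t) ^ q) := funext hφ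
  have hφd : HasDerivAt φ
      (((-z' * p * w ^ (p-1)) * E - w ^ p * (-z' * q * w ^ (q-1))) / E ^ 2) y := by
    rw [hφfun]
    have h := hnum.div hden (by rw [← hw, ← hB, ← hE]; exact hE0.ne')
    simpa [← hw, ← hB, ← hE, Pi.div_def] using h
  rw [hφ y, hφd.deriv, ← hw, ← hB, ← hE]
  -- rewrite powers
  have hA0 : 0 < w ^ p := Real.rpow_pos_of_pos hw0 p
  set A := w ^ p with hAd
  have hp1 : w ^ (p - 1) = A / w := by
    rw [hAd, Real.rpow_sub hw0, Real.rpow_one]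
  have hq1 : w ^ (q - 1) = B / w := by
    rw [hB, Real.rpow_sub hw0, Real.rpow_one]
  rw [hp1, hq1]
  -- solve for z'
  have hzv : z' = -((1 - μ) * w) / D := by
    rw [eq_div_iff hD0.ne']
    linear_combination hDz
  rw [hzv, hDv, hp, hq, hE]
  field_simp
  ring
end

section
/- Consider the scalar ODE ∂_τ w₁ + (1 - ((3-γ)/(γ+1))·μ/(μ - ((3-γ)/4)w₁))·μ·w₁ + ((γ+1)μ/(4μ - (3-γ)w₁))·w₁² = 0 for γ ∈ (1,3), μ ∈ [1/2,1). If w₁(τ₀) = ε₀ with ε₀ > 0 sufficiently small, then the solution exists for all τ ≥ τ₀, is strictly decreasing, stays in (0, ε₀), and satisfies 0 < w₁(τ) < w₁(τ₀)·e^{-α²(τ-τ₀)} for some constant α ≠ 0. If w₁(τ₀) = 0 then w₁ ≡ 0. -/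
open Real Set Filter

set_option linter.unusedVariables false

noncomputable def G16 (γ μ : ℝ) (x : ℝ) : ℝ :=
  (Real.log (4*μ/(γ+1) + x) - (γ+1)/4 * Real.log x) / ((γ-1)*μ/2)

lemma G16_hasDeriv (γ μ : ℝ) (hγ1 : 1 < γ) (hγ3 : γ < 3) (hμ1 : 1/2 ≤ μ) (hμ2 : μ < 1)
    {x : ℝ} (hx : 0 < x) (hx1 : x < 1) :
    HasDerivAt (G16 γ μ) ((1/(4*μ/(γ+1) + x) - (γ+1)/4 * (1/x)) / ((γ-1)*μ/2)) x := by
  have hμ0 : (0:ℝ) < μ := by linarith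
  have hp : (0:ℝ) < 4*μ/(γ+1) + x := by positivity
  have h1 : HasDerivAt (fun y : ℝ => Real.log (4*μ/(γ+1) + y)) (1/(4*μ/(γ+1) + x)) x := by
    have := (((hasDerivAt_id x).const_add (4*μ/(γ+1))).log hp.ne')
    simpa using this
  have h2 : HasDerivAt (fun y : ℝ => (γ+1)/4 * Real.log y) ((γ+1)/4 * (1/x)) x := by
    have := (Real.hasDerivAt_log hx.ne').const_mul ((γ+1)/4)
    simpa [one_div] using this
  exact (h1.sub h2).div_const _

lemma G16_deriv_neg (γ μ : ℝ) (hγ1 : 1 < γ) (hγ3 : γ < 3) (hμ1 : 1/2 ≤ μ) (hμ2 : μ < 1)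
    {x : ℝ} (hx : 0 < x) (hx1 : x < 1) :
    (1/(4*μ/(γ+1) + x) - (γ+1)/4 * (1/x)) / ((γ-1)*μ/2) < 0 := by
  have hμ0 : (0:ℝ) < μ := by linarith
  have hp : (0:ℝ) < 4*μ/(γ+1) + x := by positivity
  have hk : (0:ℝ) < (γ-1)*μ/2 := by nlinarith
  have hd1 : (0:ℝ) < μ - (3 - γ) / 4 * x := by nlinarith
  have hnum : 1/(4*μ/(γ+1) + x) - (γ+1)/4 * (1/x)
      = -((μ - (3-γ)/4*x)/(x*(4*μ/(γ+1) + x))) := by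
    field_simp
    ring
  rw [hnum]
  apply div_neg_of_neg_of_pos _ hk
  simp only [neg_neg, Left.neg_neg_iff]
  positivity

lemma G16_anti (γ μ : ℝ) (hγ1 : 1 < γ) (hγ3 : γ < 3) (hμ1 : 1/2 ≤ μ) (hμ2 : μ < 1) :
    StrictAntiOn (G16 γ μ) (Ioo 0 1) := by
  apply strictAntiOn_of_deriv_neg (convex_Ioo 0 1)
  · intro x hx
    exact ((G16_hasDeriv γ μ hγ1 hγ3 hμ1 hμ2 hx.1 hx.2).continuousAt).continuousWithinAt
  · intro x hx
    rw [interior_Ioo] at hx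
    rw [(G16_hasDeriv γ μ hγ1 hγ3 hμ1 hμ2 hx.1 hx.2).deriv]
    exact G16_deriv_neg γ μ hγ1 hγ3 hμ1 hμ2 hx.1 hx.2

lemma G16_surj (γ μ : ℝ) (hγ1 : 1 < γ) (hγ3 : γ < 3) (hμ1 : 1/2 ≤ μ) (hμ2 : μ < 1)
    {y : ℝ} (hy : G16 γ μ (3/4) < y) : ∃ x, x ∈ Ioo (0:ℝ) 1 ∧ G16 γ μ x = y := by
  have hμ0 : (0:ℝ) < μ := by linarith
  have hγ0 : (0:ℝ) < γ + 1 := by linarith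
  have hk : (0:ℝ) < (γ-1)*μ/2 := by nlinarith
  have hp0 : (0:ℝ) < 4*μ/(γ+1) := by positivity
  set L : ℝ := (Real.log (4*μ/(γ+1)) - ((γ-1)*μ/2)*y) * (4/(γ+1)) with hL
  set a : ℝ := min (1/2) (Real.exp L) with ha
  have ha0 : 0 < a := lt_min (by norm_num) (Real.exp_pos L)
  have ha34 : a ≤ 3/4 := le_trans (min_le_left _ _) (by norm_num)
  have hloga : Real.log a ≤ L := by
    calc Real.log a ≤ Real.log (Real.exp L) :=
          Real.log_le_log ha0 (min_le_right _ _)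
      _ = L := Real.log_exp L
  have hGa : y ≤ G16 γ μ a := by
    rw [G16, le_div_iff₀ hk]
    have h1 : Real.log (4*μ/(γ+1)) ≤ Real.log (4*μ/(γ+1) + a) :=
      Real.log_le_log hp0 (by linarith)
    have h2 : (γ+1)/4 * Real.log a ≤ (γ+1)/4 * L :=
      mul_le_mul_of_nonneg_left hloga (by positivity)
    have h3 : (γ+1)/4 * L = Real.log (4*μ/(γ+1)) - ((γ-1)*μ/2)*y := by
      rw [hL]; field_simp
    nlinarith
  have hsub : Icc a (3/4) ⊆ Ioo (0:ℝ) 1 := fun z hz => ⟨lt_of_lt_of_le ha0 hz.1, by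
    have := hz.2; norm_num at this ⊢; linarith⟩
  have cont : ContinuousOn (G16 γ μ) (Icc a (3/4)) := fun z hz =>
    ((G16_hasDeriv γ μ hγ1 hγ3 hμ1 hμ2 (hsub hz).1 (hsub hz).2).continuousAt).continuousWithinAt
  have := intermediate_value_Icc' ha34 cont (⟨hy.le, hGa⟩ : y ∈ Icc (G16 γ μ (3/4)) (G16 γ μ a))
  obtain ⟨x, hxmem, hGx⟩ := this
  exact ⟨x, hsub hxmem, hGx⟩

lemma stmt16_inv (γ μ x : ℝ) (hγ1 : 1 < γ) (hγ3 : γ < 3) (hμ1 : 1/2 ≤ μ) (hμ2 : μ < 1)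
    (hx : 0 < x) (hx1 : x < 1) :
    ((1/(4*μ/(γ+1) + x) - (γ+1)/4 * (1/x)) / ((γ-1)*μ/2))⁻¹
      = -((1 - (3 - γ) / (γ + 1) * μ / (μ - (3 - γ) / 4 * x)) * μ * x
          + (γ + 1) * μ / (4 * μ - (3 - γ) * x) * x ^ 2) := by
  have hγ0 : γ + 1 ≠ 0 := by nlinarith
  have hμ0 : (0:ℝ) < μ := by linarith
  have hd1 : (0:ℝ) < μ - (3 - γ) / 4 * x := by nlinarith
  have hd2 : (0:ℝ) < 4 * μ - (3 - γ) * x := by nlinarith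
  have hp : (0:ℝ) < 4*μ/(γ+1) + x := by positivity
  have hk : (0:ℝ) < (γ-1)*μ/2 := by nlinarith
  have key : (1/(4*μ/(γ+1) + x) - (γ+1)/4 * (1/x)) / ((γ-1)*μ/2)
      = -((μ - (3-γ)/4*x) / ((γ-1)*μ/2 * x * (4*μ/(γ+1)+x))) := by
    field_simp
    ring
  have e2 : (γ+1)*μ/(4*μ - (3-γ)*x) * x^2 = ((γ+1)*μ/4*x^2) / (μ - (3-γ)/4*x) := by
    rw [show (4:ℝ)*μ - (3-γ)*x = 4*(μ - (3-γ)/4*x) by ring]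
    rw [mul_comm (4:ℝ) _, ← div_div]
    ring
  have this1 : ((μ - (3-γ)/4*x) - (3-γ)/(γ+1)*μ) / (μ - (3-γ)/4*x)
      = 1 - (3-γ)/(γ+1)*μ/(μ - (3-γ)/4*x) := by
    rw [sub_div, div_self hd1.ne']
  have e1 : (1 - (3 - γ) / (γ + 1) * μ / (μ - (3 - γ) / 4 * x)) * μ * x
      = (((μ - (3-γ)/4*x) - (3-γ)/(γ+1)*μ) * μ * x) / (μ - (3-γ)/4*x) := by
    rw [← this1]
    ring
  rw [key, inv_neg, inv_div, neg_inj, e1, e2, ← add_div, div_eq_div_iff hd1.ne' hd1.ne']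
  field_simp
  ring

set_option maxHeartbeats 1000000 in
lemma stmt16_bound (γ μ x : ℝ) (hγ1 : 1 < γ) (hγ3 : γ < 3) (hμ1 : 1/2 ≤ μ) (hμ2 : μ < 1)
    (hx : |x| ≤ 1/2) :
    ‖-((1 - (3 - γ) / (γ + 1) * μ / (μ - (3 - γ) / 4 * x)) * μ * x
          + (γ + 1) * μ / (4 * μ - (3 - γ) * x) * x ^ 2)‖ ≤ 12 * ‖x‖ + 0 := by
  obtain ⟨hxl, hxr⟩ := abs_le.mp hx
  have hγ0 : γ + 1 ≠ 0 := by nlinarith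
  have hμ0 : (0:ℝ) < μ := by linarith
  have hd1 : (1/4 : ℝ) ≤ μ - (3 - γ) / 4 * x := by nlinarith
  have hd1' : (0:ℝ) < μ - (3 - γ) / 4 * x := by linarith
  have this1 : ((μ - (3-γ)/4*x) - (3-γ)/(γ+1)*μ) / (μ - (3-γ)/4*x)
      = 1 - (3-γ)/(γ+1)*μ/(μ - (3-γ)/4*x) := by
    rw [sub_div, div_self hd1'.ne']
  have e1 : (1 - (3 - γ) / (γ + 1) * μ / (μ - (3 - γ) / 4 * x)) * μ * x
      = (((μ - (3-γ)/4*x) - (3-γ)/(γ+1)*μ) * μ * x) / (μ - (3-γ)/4*x) := by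
    rw [← this1]; ring
  have e2 : (γ+1)*μ/(4*μ - (3-γ)*x) * x^2 = ((γ+1)*μ/4*x^2) / (μ - (3-γ)/4*x) := by
    rw [show (4:ℝ)*μ - (3-γ)*x = 4*(μ - (3-γ)/4*x) by ring]
    rw [mul_comm (4:ℝ) _, ← div_div]
    ring
  rw [Real.norm_eq_abs, Real.norm_eq_abs, abs_neg, e1, e2, ← add_div, abs_div,
    abs_of_pos hd1', add_zero, div_le_iff₀ hd1']
  have hq0 : (0:ℝ) ≤ (3-γ)/(γ+1)*μ :=
    mul_nonneg (div_nonneg (by linarith) (by linarith)) hμ0.le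
  have hq1 : (3-γ)/(γ+1)*μ ≤ 1 := by
    have h1 : (3-γ)/(γ+1) ≤ 1 := by
      rw [div_le_one (by linarith)]; linarith
    nlinarith
  have hb1 : |(μ - (3-γ)/4*x) - (3-γ)/(γ+1)*μ| ≤ 2 := by
    rw [abs_le]; constructor <;> nlinarith
  have hb2 : |(((μ - (3-γ)/4*x) - (3-γ)/(γ+1)*μ) * μ * x)| ≤ 2 * |x| := by
    rw [abs_mul, abs_mul, abs_of_pos hμ0]
    have t1 : |(μ - (3-γ)/4*x) - (3-γ)/(γ+1)*μ| * (μ * |x|) ≤ 2 * (μ * |x|) :=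
      mul_le_mul_of_nonneg_right hb1 (by positivity)
    nlinarith [abs_nonneg x]
  have hb3 : |(γ+1)*μ/4*x^2| ≤ |x| / 2 := by
    rw [abs_mul, abs_of_nonneg (by positivity : (0:ℝ) ≤ (γ+1)*μ/4), abs_pow x 2]
    have hs : |x|^2 ≤ |x| * (1/2) := by nlinarith [abs_nonneg x]
    have hc : (γ+1)*μ/4 ≤ 1 := by nlinarith
    calc (γ+1)*μ/4 * |x|^2 ≤ 1 * |x|^2 := mul_le_mul_of_nonneg_right hc (sq_nonneg _)
      _ = |x|^2 := one_mul _
      _ ≤ |x| * (1/2) := hs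
      _ = |x|/2 := by ring
  calc |(((μ - (3-γ)/4*x) - (3-γ)/(γ+1)*μ) * μ * x) + (γ+1)*μ/4*x^2|
      ≤ |(((μ - (3-γ)/4*x) - (3-γ)/(γ+1)*μ) * μ * x)| + |(γ+1)*μ/4*x^2| := abs_add_le _ _
    _ ≤ 2 * |x| + |x|/2 := by linarith
    _ ≤ 12 * |x| * (μ - (3-γ)/4*x) := by
        nlinarith [abs_nonneg x, mul_le_mul_of_nonneg_left hd1 (abs_nonneg x)]

set_option maxHeartbeats 1000000 in
lemma stmt16_exists (γ μ τ₀ ε₀ : ℝ) (hγ1 : 1 < γ) (hγ3 : γ < 3) (hμ1 : 1/2 ≤ μ)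
    (hμ2 : μ < 1) (hε0 : 0 < ε₀) (hε1 : ε₀ < 1/2) :
      ∃ w : ℝ → ℝ, w τ₀ = ε₀ ∧
        (∀ τ : ℝ, τ₀ ≤ τ → HasDerivAt w
          (-((1 - (3 - γ) / (γ + 1) * μ / (μ - (3 - γ) / 4 * w τ)) * μ * w τ
              + (γ + 1) * μ / (4 * μ - (3 - γ) * w τ) * (w τ) ^ 2)) τ) ∧
        StrictAntiOn w (Set.Ici τ₀) ∧
        (∃ α : ℝ, α ≠ 0 ∧ ∀ τ : ℝ, τ₀ < τ →
          0 < w τ ∧ w τ < ε₀ ∧ w τ < ε₀ * Real.exp (-α ^ 2 * (τ - τ₀))) := by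
  classical
  have hmem34 : (3/4:ℝ) ∈ Ioo (0:ℝ) 1 := by norm_num
  have hmemε : ε₀ ∈ Ioo (0:ℝ) 1 := ⟨hε0, by linarith⟩
  have hanti := G16_anti γ μ hγ1 hγ3 hμ1 hμ2
  have hGε : G16 γ μ (3/4) < G16 γ μ ε₀ := hanti hmemε hmem34 (by linarith)
  set w : ℝ → ℝ := fun τ =>
    if h : ∃ x, x ∈ Ioo (0:ℝ) 1 ∧ G16 γ μ x = G16 γ μ ε₀ + (τ - τ₀) then h.choose else 0
    with hw
  have key : ∀ τ : ℝ, G16 γ μ (3/4) < G16 γ μ ε₀ + (τ - τ₀) →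
      w τ ∈ Ioo (0:ℝ) 1 ∧ G16 γ μ (w τ) = G16 γ μ ε₀ + (τ - τ₀) := by
    intro τ hτ
    have hex := G16_surj γ μ hγ1 hγ3 hμ1 hμ2 hτ
    rw [hw]
    simp only [dif_pos hex]
    exact hex.choose_spec
  have hinj := hanti.injOn
  have hP : ∀ τ, τ₀ ≤ τ → G16 γ μ (3/4) < G16 γ μ ε₀ + (τ - τ₀) := fun τ h => by linarith
  have hwτ₀ : w τ₀ = ε₀ := by
    obtain ⟨hmem, hG⟩ := key τ₀ (hP τ₀ le_rfl)
    apply hinj hmem hmemε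
    rw [hG]; ring
  have hcomp : ∀ {s t : ℝ}, G16 γ μ (3/4) < G16 γ μ ε₀ + (s - τ₀) →
      G16 γ μ (3/4) < G16 γ μ ε₀ + (t - τ₀) → s < t → w t < w s := by
    intro s t hs ht hst
    obtain ⟨hms, hGs⟩ := key s hs
    obtain ⟨hmt, hGt⟩ := key t ht
    by_contra hle
    push_neg at hle
    rcases eq_or_lt_of_le hle with he | hlt
    · rw [← he] at hGt
      rw [hGs] at hGt
      linarith
    · have := hanti hms hmt hlt
      rw [hGs, hGt] at this
      linarith
  have hantiw : StrictAntiOn w (Set.Ici τ₀) := fun s hs t ht hst =>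
    hcomp (hP s hs) (hP t ht) hst
  have hcont : ∀ τ : ℝ, G16 γ μ (3/4) < G16 γ μ ε₀ + (τ - τ₀) → ContinuousAt w τ := by
    intro τ hτ
    obtain ⟨hxm, hGx⟩ := key τ hτ
    rw [Metric.continuousAt_iff]
    intro ε hε
    set x₀ := w τ with hx₀
    set ε' : ℝ := min (min (ε/2) (x₀/2)) ((1 - x₀)/2) with hε'
    have hε'0 : 0 < ε' := lt_min (lt_min (by linarith) (by linarith [hxm.1])) (by linarith [hxm.2])
    have hε'x : ε' ≤ x₀/2 := le_trans (min_le_left _ _) (min_le_right _ _)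
    have hε'1 : ε' ≤ (1 - x₀)/2 := min_le_right _ _
    have hε'ε : ε' ≤ ε/2 := le_trans (min_le_left _ _) (min_le_left _ _)
    have hxm1 : x₀ - ε' ∈ Ioo (0:ℝ) 1 := ⟨by linarith [hxm.1], by linarith [hxm.2]⟩
    have hxm2 : x₀ + ε' ∈ Ioo (0:ℝ) 1 := ⟨by linarith [hxm.1], by linarith⟩
    have hδ1 : 0 < G16 γ μ (x₀ - ε') - G16 γ μ x₀ := by
      have := hanti hxm1 hxm (by linarith)
      linarith
    have hδ2 : 0 < G16 γ μ x₀ - G16 γ μ (x₀ + ε') := by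
      have := hanti hxm hxm2 (by linarith)
      linarith
    have hδ3 : 0 < G16 γ μ ε₀ + (τ - τ₀) - G16 γ μ (3/4) := by linarith
    refine ⟨min (min (G16 γ μ (x₀ - ε') - G16 γ μ x₀) (G16 γ μ x₀ - G16 γ μ (x₀ + ε')))
      (G16 γ μ ε₀ + (τ - τ₀) - G16 γ μ (3/4)), by positivity, ?_⟩
    intro y hy
    rw [Real.dist_eq] at hy ⊢
    have hy1 := abs_lt.mp hy
    have hyb1 : y - τ < G16 γ μ (x₀ - ε') - G16 γ μ x₀ :=
      lt_of_lt_of_le hy1.2 (le_trans (min_le_left _ _) (min_le_left _ _))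
    have hyb2 : -(G16 γ μ x₀ - G16 γ μ (x₀ + ε')) < y - τ :=
      lt_of_le_of_lt (neg_le_neg (le_trans (min_le_left _ _) (min_le_right _ _))) hy1.1
    have hyb3 : -(G16 γ μ ε₀ + (τ - τ₀) - G16 γ μ (3/4)) < y - τ :=
      lt_of_le_of_lt (neg_le_neg (min_le_right _ _)) hy1.1
    have hyP : G16 γ μ (3/4) < G16 γ μ ε₀ + (y - τ₀) := by linarith
    obtain ⟨hym, hGy⟩ := key y hyP
    have hGyx : G16 γ μ (w y) = G16 γ μ x₀ + (y - τ) := by rw [hGy, hGx]; ring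
    have hlow : x₀ - ε' < w y := by
      by_contra h
      push_neg at h
      have hGge : G16 γ μ (x₀ - ε') ≤ G16 γ μ (w y) := by
        rcases eq_or_lt_of_le h with he | hlt
        · rw [he]
        · exact (hanti hym hxm1 hlt).le
      linarith
    have hhigh : w y < x₀ + ε' := by
      by_contra h
      push_neg at h
      have hGge : G16 γ μ (w y) ≤ G16 γ μ (x₀ + ε') := by
        rcases eq_or_lt_of_le h with he | hlt
        · rw [← he]
        · exact (hanti hxm2 hym hlt).le
      linarith
    rw [abs_lt]
    constructor <;> linarith
  have hderiv : ∀ τ : ℝ, τ₀ ≤ τ → HasDerivAt w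
      (-((1 - (3 - γ) / (γ + 1) * μ / (μ - (3 - γ) / 4 * w τ)) * μ * w τ
          + (γ + 1) * μ / (4 * μ - (3 - γ) * w τ) * (w τ) ^ 2)) τ := by
    intro τ hτ
    have hPτ := hP τ hτ
    obtain ⟨hxm, hGx⟩ := key τ hPτ
    have hg'neg := G16_deriv_neg γ μ hγ1 hγ3 hμ1 hμ2 hxm.1 hxm.2
    have hfd : HasDerivAt (fun x => τ₀ + (G16 γ μ x - G16 γ μ ε₀))
        ((1/(4*μ/(γ+1) + w τ) - (γ+1)/4 * (1/(w τ))) / ((γ-1)*μ/2)) (w τ) :=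
      ((G16_hasDeriv γ μ hγ1 hγ3 hμ1 hμ2 hxm.1 hxm.2).sub_const _).const_add τ₀
    have hopen : IsOpen {y : ℝ | G16 γ μ (3/4) < G16 γ μ ε₀ + (y - τ₀)} := by
      have hset : {y : ℝ | G16 γ μ (3/4) < G16 γ μ ε₀ + (y - τ₀)}
          = Ioi (τ₀ - (G16 γ μ ε₀ - G16 γ μ (3/4))) := by
        ext y
        simp only [mem_setOf_eq, mem_Ioi]
        constructor <;> intro <;> linarith
      rw [hset]
      exact isOpen_Ioi
    have hev : ∀ᶠ y in nhds τ, (fun x => τ₀ + (G16 γ μ x - G16 γ μ ε₀)) (w y) = y := by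
      filter_upwards [hopen.mem_nhds hPτ] with y hy
      have := (key y hy).2
      simp only [this]
      ring
    have hder := HasDerivAt.of_local_left_inverse (hcont τ hPτ) hfd hg'neg.ne hev
    rw [stmt16_inv γ μ (w τ) hγ1 hγ3 hμ1 hμ2 hxm.1 hxm.2] at hder
    exact hder
  refine ⟨w, hwτ₀, hderiv, hantiw, Real.sqrt (2*μ*(γ-1)/(γ+1)), ?_, ?_⟩
  · have hc : (0:ℝ) < 2*μ*(γ-1)/(γ+1) := by
      apply div_pos (by nlinarith) (by linarith)
    exact (Real.sqrt_pos.mpr hc).ne'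
  · intro τ hτ
    have hPτ := hP τ hτ.le
    obtain ⟨hxm, hGx⟩ := key τ hPτ
    have hc : (0:ℝ) < 2*μ*(γ-1)/(γ+1) := by
      apply div_pos (by nlinarith) (by linarith)
    have hsq : Real.sqrt (2*μ*(γ-1)/(γ+1)) ^ 2 = 2*μ*(γ-1)/(γ+1) := Real.sq_sqrt hc.le
    have hμ0 : (0:ℝ) < μ := by linarith
    have hk : (0:ℝ) < (γ-1)*μ/2 := by nlinarith
    have hwlt : w τ < ε₀ := by
      by_contra h
      push_neg at h
      rcases eq_or_lt_of_le h with he | hlt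
      · rw [← he] at hGx; linarith
      · have := hanti hmemε hxm hlt
        rw [hGx] at this
        linarith
    refine ⟨hxm.1, hwlt, ?_⟩
    -- exponential decay
    have hGx' : Real.log (4*μ/(γ+1) + w τ) - (γ+1)/4 * Real.log (w τ)
        = Real.log (4*μ/(γ+1) + ε₀) - (γ+1)/4 * Real.log ε₀ + ((γ-1)*μ/2) * (τ - τ₀) := by
      have h2 := congrArg (· * ((γ-1)*μ/2)) hGx
      simp only [G16] at h2
      rw [div_mul_cancel₀ _ hk.ne', add_mul, div_mul_cancel₀ _ hk.ne'] at h2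
      linarith [h2]
    have hplt : Real.log (4*μ/(γ+1) + w τ) < Real.log (4*μ/(γ+1) + ε₀) := by
      apply Real.log_lt_log (add_pos (div_pos (by linarith) (by linarith : (0:ℝ) < γ+1)) hxm.1)
      linarith
    have hA : (0:ℝ) < (γ+1)/4 := by linarith
    have hkey : Real.log (w τ) < Real.log ε₀ + (-(2*μ*(γ-1)/(γ+1)) * (τ - τ₀)) := by
      have hAc : (γ+1)/4 * (2*μ*(γ-1)/(γ+1)) = (γ-1)*μ/2 := by
        field_simp
        ring
      nlinarith [hGx', hplt, hA]
    calc w τ = Real.exp (Real.log (w τ)) := (Real.exp_log hxm.1).symm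
      _ < Real.exp (Real.log ε₀ + (-(2*μ*(γ-1)/(γ+1)) * (τ - τ₀))) :=
          Real.exp_lt_exp.mpr hkey
      _ = ε₀ * Real.exp (-(2*μ*(γ-1)/(γ+1)) * (τ - τ₀)) := by
          rw [Real.exp_add, Real.exp_log hε0]
      _ = ε₀ * Real.exp (-Real.sqrt (2*μ*(γ-1)/(γ+1)) ^ 2 * (τ - τ₀)) := by rw [hsq]

set_option maxHeartbeats 1000000 in
lemma stmt16_uniq (γ μ τ₀ : ℝ) (hγ1 : 1 < γ) (hγ3 : γ < 3) (hμ1 : 1/2 ≤ μ) (hμ2 : μ < 1)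
    (w : ℝ → ℝ)
    (hw : ∀ τ : ℝ, τ₀ ≤ τ → HasDerivAt w
        (-((1 - (3 - γ) / (γ + 1) * μ / (μ - (3 - γ) / 4 * w τ)) * μ * w τ
            + (γ + 1) * μ / (4 * μ - (3 - γ) * w τ) * (w τ) ^ 2)) τ)
    (h0 : w τ₀ = 0) : ∀ τ : ℝ, τ₀ ≤ τ → w τ = 0 := by
  intro T hT
  set S : Set ℝ := {t | t ∈ Icc τ₀ T ∧ ∀ s ∈ Icc τ₀ t, w s = 0} with hS
  have hne : τ₀ ∈ S := ⟨⟨le_rfl, hT⟩, fun s hs => by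
    have hs' : s = τ₀ := le_antisymm hs.2 hs.1
    rw [hs', h0]⟩
  have hbdd : BddAbove S := ⟨T, fun t ht => ht.1.2⟩
  set c := sSup S with hc
  have hc0 : τ₀ ≤ c := le_csSup hbdd hne
  have hcT : c ≤ T := csSup_le ⟨τ₀, hne⟩ (fun t ht => ht.1.2)
  have hzero : ∀ s ∈ Ico τ₀ c, w s = 0 := by
    intro s hs
    obtain ⟨t, htS, hst⟩ := exists_lt_of_lt_csSup ⟨τ₀, hne⟩ hs.2
    exact htS.2 s ⟨hs.1, hst.le⟩
  have hwc : w c = 0 := by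
    rcases eq_or_lt_of_le hc0 with he | hlt
    · rw [← he]; exact h0
    · have h1 : Tendsto w (nhdsWithin c (Iio c)) (nhds (w c)) :=
        ((hw c hc0).continuousAt.continuousWithinAt : ContinuousWithinAt w (Iio c) c)
      have hev : w =ᶠ[nhdsWithin c (Iio c)] (fun _ => 0) :=
        eventually_of_mem (Ioo_mem_nhdsLT_of_mem ⟨hlt, le_rfl⟩)
          (fun s hs => hzero s ⟨hs.1.le, hs.2⟩)
      have h2 : Tendsto w (nhdsWithin c (Iio c)) (nhds 0) := by
        rw [tendsto_congr' hev]; exact tendsto_const_nhds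
      exact tendsto_nhds_unique h1 h2
  have hczero : ∀ s ∈ Icc τ₀ c, w s = 0 := by
    intro s hs
    rcases eq_or_lt_of_le hs.2 with he | hlt
    · rw [he, hwc]
    · exact hzero s ⟨hs.1, hlt⟩
  have hceq : c = T := by
    by_contra hne'
    have hcT' : c < T := lt_of_le_of_ne hcT hne'
    obtain ⟨η, hη0, hη⟩ := Metric.continuousAt_iff.mp (hw c hc0).continuousAt (1/2) (by norm_num)
    set d := min (c + η/2) T with hd
    have hcd : c < d := lt_min (by linarith) hcT'
    have hdT : d ≤ T := min_le_right _ _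
    have hgron := norm_le_gronwallBound_of_norm_deriv_right_le
      (f := w) (f' := fun t => (-((1 - (3 - γ) / (γ + 1) * μ / (μ - (3 - γ) / 4 * w t)) * μ * w t
            + (γ + 1) * μ / (4 * μ - (3 - γ) * w t) * (w t) ^ 2)))
      (δ := 0) (K := 12) (ε := 0) (a := c) (b := d)
      (fun t ht => (hw t (le_trans hc0 ht.1)).continuousAt.continuousWithinAt)
      (fun t ht => (hw t (le_trans hc0 ht.1)).hasDerivWithinAt)
      (by rw [hwc]; simp)
      (by
        intro t ht
        have htc : |t - c| < η := by
          rw [abs_of_nonneg (by linarith [ht.1])]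
          have := ht.2
          have hd2 : d ≤ c + η/2 := min_le_left _ _
          linarith
        have := hη (by rwa [Real.dist_eq] : dist t c < η)
        rw [Real.dist_eq, hwc, sub_zero] at this
        exact stmt16_bound γ μ (w t) hγ1 hγ3 hμ1 hμ2 this.le)
    have hzd : ∀ t ∈ Icc c d, w t = 0 := by
      intro t ht
      have := hgron t ht
      rw [gronwallBound_ε0_δ0] at this
      simpa using le_antisymm this (norm_nonneg _) |>.symm ▸ (norm_eq_zero.mp (le_antisymm this (norm_nonneg _)))
    have hdS : d ∈ S := ⟨⟨le_trans hc0 hcd.le, hdT⟩, fun s hs => by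
      rcases le_or_gt s c with hsc | hsc
      · exact hczero s ⟨hs.1, hsc⟩
      · exact hzd s ⟨hsc.le, hs.2⟩⟩
    have := le_csSup hbdd hdS
    linarith
  exact hczero T ⟨hT, le_of_eq hceq.symm⟩

/-- existence, monotone decay, and exponential decay for the modulation
ODE for `w₁`, together with uniqueness of the trivial solution. -/
theorem stmt16 (γ μ τ₀ : ℝ) (hγ : 1 < γ ∧ γ < 3) (hμ : 1/2 ≤ μ ∧ μ < 1) :
    (∃ ε₁ : ℝ, 0 < ε₁ ∧ ∀ ε₀ : ℝ, 0 < ε₀ → ε₀ < ε₁ →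
      ∃ w : ℝ → ℝ, w τ₀ = ε₀ ∧
        (∀ τ : ℝ, τ₀ ≤ τ → HasDerivAt w
          (-((1 - (3 - γ) / (γ + 1) * μ / (μ - (3 - γ) / 4 * w τ)) * μ * w τ
              + (γ + 1) * μ / (4 * μ - (3 - γ) * w τ) * (w τ) ^ 2)) τ) ∧
        StrictAntiOn w (Set.Ici τ₀) ∧
        (∃ α : ℝ, α ≠ 0 ∧ ∀ τ : ℝ, τ₀ < τ →
          0 < w τ ∧ w τ < ε₀ ∧ w τ < ε₀ * Real.exp (-α ^ 2 * (τ - τ₀)))) ∧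
    (∀ w : ℝ → ℝ,
      (∀ τ : ℝ, τ₀ ≤ τ → HasDerivAt w
        (-((1 - (3 - γ) / (γ + 1) * μ / (μ - (3 - γ) / 4 * w τ)) * μ * w τ
            + (γ + 1) * μ / (4 * μ - (3 - γ) * w τ) * (w τ) ^ 2)) τ) →
      w τ₀ = 0 → ∀ τ : ℝ, τ₀ ≤ τ → w τ = 0) := by
  refine ⟨⟨1/2, by norm_num, fun ε₀ hε0 hε1 =>
    stmt16_exists γ μ τ₀ ε₀ hγ.1 hγ.2 hμ.1 hμ.2 hε0 hε1⟩,
    fun w hw h0 τ hτ => stmt16_uniq γ μ τ₀ hγ.1 hγ.2 hμ.1 hμ.2 w hw h0 τ hτ⟩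
end

section
/- Let n ≥ 2 be an integer and f ∈ Hⁿ([0,∞)) with f(0) = f'(0) = ⋯ = f^{(n-1)}(0) = 0. Then for each i ∈ {1,…,n-1} and y_* > 0 there is a constant C (depending on y_*, n, i) such that ‖y^{i-n} ∂_y^i f‖_{L²([y_*,∞))} ≤ C ‖y^{-n} f‖_{L²([0,∞))}^{1-i/n} · ‖∂_y^n f‖_{L²([0,∞))}^{i/n}. -/
open MeasureTheory Set Filter

namespace Stmt19Aux


lemma sqrt_mul_add (a b δ : ℝ) (ha : 0 ≤ a) (hb : 0 ≤ b) (hδ : 0 ≤ δ) :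
    Real.sqrt (a * b) + δ ≤ Real.sqrt ((a + δ) * (b + δ)) := by
  have hs : Real.sqrt (a * b) ≤ (a + b) / 2 := by
    have h1 : Real.sqrt (a * b) ≤ Real.sqrt (((a + b) / 2) ^ 2) :=
      Real.sqrt_le_sqrt (by nlinarith [sq_nonneg (a - b)])
    rwa [Real.sqrt_sq (by positivity)] at h1
  have hnn : 0 ≤ Real.sqrt (a * b) + δ := by positivity
  have h2 : (Real.sqrt (a * b) + δ) ^ 2 ≤ (a + δ) * (b + δ) := by
    nlinarith [Real.sq_sqrt (mul_nonneg ha hb), Real.sqrt_nonneg (a * b)]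
  calc Real.sqrt (a * b) + δ = Real.sqrt ((Real.sqrt (a * b) + δ) ^ 2) :=
        (Real.sqrt_sq hnn).symm
    _ ≤ Real.sqrt ((a + δ) * (b + δ)) := Real.sqrt_le_sqrt h2

lemma discrete_convex_chord (n : ℕ) (p : ℕ → ℝ)
    (hp : ∀ j, 1 ≤ j → j < n → p j ≤ (p (j - 1) + p (j + 1)) / 2) :
    ∀ i ≤ n, (n : ℝ) * p i ≤ ((n : ℝ) - i) * p 0 + i * p n := by
  set D : ℕ → ℝ := fun x => p (x + 1) - p x with hD
  have hstep : ∀ x, x + 1 < n → D x ≤ D (x + 1) := by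
    intro x hx
    have := hp (x + 1) (by omega) hx
    simp only [Nat.add_sub_cancel] at this
    simp only [hD]
    linarith
  have Dmono : ∀ y, y < n → ∀ x ≤ y, D x ≤ D y := by
    intro y
    induction y with
    | zero => intro _ x hx; interval_cases x; exact le_rfl
    | succ m ih =>
      intro hy x hx
      rcases Nat.lt_succ_iff_lt_or_eq.mp (Nat.lt_succ_of_le hx) with h | h
      · exact le_trans (ih (by omega) x (by omega)) (hstep m hy)
      · exact h ▸ le_rfl
  intro i hi
  have hS1 : ∑ x ∈ Finset.range i, D x = p i - p 0 := by
    simpa [hD] using Finset.sum_range_sub p i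
  have hS2 : ∑ x ∈ Finset.range n, D x = p n - p 0 := by
    simpa [hD] using Finset.sum_range_sub p n
  have hS2' : ∑ x ∈ Finset.Ico i n, D x = p n - p i := by
    rw [Finset.sum_Ico_eq_sub _ hi, hS1, hS2]; ring
  have key : ((n : ℝ) - i) * (p i - p 0) ≤ (i : ℝ) * (p n - p i) := by
    rw [← hS1, ← hS2']
    have h1 : ∀ y ∈ Finset.Ico i n, (∑ x ∈ Finset.range i, D x) ≤ (i : ℝ) * D y := by
      intro y hy
      rw [Finset.mem_Ico] at hy
      calc (∑ x ∈ Finset.range i, D x) ≤ ∑ _x ∈ Finset.range i, D y :=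
            Finset.sum_le_sum fun x hx =>
              Dmono y hy.2 x (le_of_lt (lt_of_lt_of_le (Finset.mem_range.mp hx) hy.1))
        _ = (i : ℝ) * D y := by simp [Finset.sum_const, nsmul_eq_mul]
    calc ((n : ℝ) - i) * (∑ x ∈ Finset.range i, D x)
        = ∑ _y ∈ Finset.Ico i n, (∑ x ∈ Finset.range i, D x) := by
          rw [Finset.sum_const, Nat.card_Ico, nsmul_eq_mul, Nat.cast_sub hi]
      _ ≤ ∑ y ∈ Finset.Ico i n, (i : ℝ) * D y := Finset.sum_le_sum h1
      _ = (i : ℝ) * ∑ y ∈ Finset.Ico i n, D y := by rw [Finset.mul_sum]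
  have hin : (i : ℝ) ≤ (n : ℝ) := by exact_mod_cast hi
  nlinarith [key]

lemma seq_pos (n : ℕ) (hn : 1 ≤ n) (K : ℝ) (hK : 1 ≤ K) (Q : ℕ → ℝ)
    (hpos : ∀ j ≤ n, 0 < Q j)
    (hQ : ∀ j, 1 ≤ j → j < n → Q j ≤ K * Real.sqrt (Q (j - 1) * Q (j + 1))) :
    ∀ i ≤ n, Q i ≤ K ^ (n * n) * Q 0 ^ (1 - (i : ℝ) / n) * Q n ^ ((i : ℝ) / n) := by
  intro i hi
  have hK0 : (0 : ℝ) < K := lt_of_lt_of_le one_pos hK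
  set κ := Real.log K with hκdef
  have hκ : 0 ≤ κ := Real.log_nonneg hK
  set p : ℕ → ℝ := fun j => Real.log (Q j) - κ * j * ((n : ℝ) - j) with hp
  have hmid : ∀ j, 1 ≤ j → j < n → p j ≤ (p (j - 1) + p (j + 1)) / 2 := by
    intro j hj1 hjn
    have hq0 : 0 < Q (j - 1) := hpos _ (by omega)
    have hq2 : 0 < Q (j + 1) := hpos _ (by omega)
    have hqj : 0 < Q j := hpos _ (by omega)
    have hlog : Real.log (Q j) ≤ κ + (Real.log (Q (j - 1)) + Real.log (Q (j + 1))) / 2 := by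
      have h1 := Real.log_le_log hqj (hQ j hj1 hjn)
      rwa [Real.log_mul (ne_of_gt hK0)
          (ne_of_gt (Real.sqrt_pos.mpr (mul_pos hq0 hq2))),
        Real.log_sqrt (le_of_lt (mul_pos hq0 hq2)),
        Real.log_mul (ne_of_gt hq0) (ne_of_gt hq2)] at h1
    have hcast : ((j - 1 : ℕ) : ℝ) = (j : ℝ) - 1 := by
      have : (1 : ℕ) ≤ j := hj1
      push_cast [this]; ring
    simp only [hp, hcast, Nat.cast_add, Nat.cast_one]
    nlinarith [hlog]
  have hchord := discrete_convex_chord n p hmid i hi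
  have hn0 : (0 : ℝ) < n := by exact_mod_cast hn
  have hp0 : p 0 = Real.log (Q 0) := by simp [hp]
  have hpn : p n = Real.log (Q n) := by simp [hp]
  have hlogQ : Real.log (Q i) ≤ (1 - (i : ℝ) / n) * Real.log (Q 0)
      + ((i : ℝ) / n) * Real.log (Q n) + κ * i * ((n : ℝ) - i) := by
    have hT : (n : ℝ) * Real.log (Q i) ≤ (n : ℝ) * ((1 - (i : ℝ) / n) * Real.log (Q 0)
        + ((i : ℝ) / n) * Real.log (Q n) + κ * i * ((n : ℝ) - i)) := by
      have expand : (n : ℝ) * ((1 - (i : ℝ) / n) * Real.log (Q 0)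
          + ((i : ℝ) / n) * Real.log (Q n) + κ * i * ((n : ℝ) - i))
          = ((n : ℝ) - i) * Real.log (Q 0) + (i : ℝ) * Real.log (Q n)
            + (n : ℝ) * (κ * i * ((n : ℝ) - i)) := by
        field_simp
      rw [expand]
      have hch : (n : ℝ) * p i ≤ ((n : ℝ) - i) * p 0 + (i : ℝ) * p n := hchord
      rw [hp0, hpn] at hch
      simp only [hp] at hch
      nlinarith [hch]
    exact le_of_mul_le_mul_left hT hn0
  have hQi : 0 < Q i := hpos i hi
  have hmain : Q i ≤ Q 0 ^ (1 - (i : ℝ) / n) * Q n ^ ((i : ℝ) / n) * K ^ (i * (n - i)) := by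
    have h1 : Q i = Real.exp (Real.log (Q i)) := (Real.exp_log hQi).symm
    rw [h1]
    have h2 : Real.exp (Real.log (Q i)) ≤ Real.exp ((1 - (i : ℝ) / n) * Real.log (Q 0)
        + ((i : ℝ) / n) * Real.log (Q n) + κ * i * ((n : ℝ) - i)) :=
      Real.exp_le_exp.mpr hlogQ
    refine h2.trans (le_of_eq ?_)
    rw [Real.exp_add, Real.exp_add]
    congr 1
    · congr 1
      · rw [Real.rpow_def_of_pos (hpos 0 (by omega)), mul_comm]
      · rw [Real.rpow_def_of_pos (hpos n le_rfl), mul_comm]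
    · have hcast : ((i * (n - i) : ℕ) : ℝ) = (i : ℝ) * ((n : ℝ) - i) := by
        push_cast [Nat.cast_sub hi]; ring
      rw [← Real.exp_log hK0, ← Real.exp_nat_mul, hcast]
      rw [hκdef]; ring_nf
  have hpow : K ^ (i * (n - i)) ≤ K ^ (n * n) := by
    exact pow_le_pow_right₀ hK (Nat.mul_le_mul hi (Nat.sub_le n i))
  calc Q i ≤ Q 0 ^ (1 - (i : ℝ) / n) * Q n ^ ((i : ℝ) / n) * K ^ (i * (n - i)) := hmain
    _ ≤ Q 0 ^ (1 - (i : ℝ) / n) * Q n ^ ((i : ℝ) / n) * K ^ (n * n) := by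
        exact mul_le_mul_of_nonneg_left hpow
          (mul_nonneg (Real.rpow_nonneg (hpos 0 (by omega)).le _)
            (Real.rpow_nonneg (hpos n le_rfl).le _))
    _ = K ^ (n * n) * Q 0 ^ (1 - (i : ℝ) / n) * Q n ^ ((i : ℝ) / n) := by ring

lemma seq_main (n : ℕ) (hn : 1 ≤ n) (K : ℝ) (hK : 1 ≤ K) (Q : ℕ → ℝ)
    (hnn : ∀ j ≤ n, 0 ≤ Q j)
    (hQ : ∀ j, 1 ≤ j → j < n → Q j ≤ K * Real.sqrt (Q (j - 1) * Q (j + 1))) :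
    ∀ i ≤ n, Q i ≤ K ^ (n * n) * Q 0 ^ (1 - (i : ℝ) / n) * Q n ^ ((i : ℝ) / n) := by
  intro i hi
  have hn0 : (0 : ℝ) < n := by exact_mod_cast hn
  have hθ1 : 0 ≤ 1 - (i : ℝ) / n := by
    rw [sub_nonneg, div_le_one hn0]; exact_mod_cast hi
  have hθ2 : 0 ≤ (i : ℝ) / n := by positivity
  have key : ∀ δ : ℝ, 0 < δ →
      Q i ≤ K ^ (n * n) * (Q 0 + δ) ^ (1 - (i : ℝ) / n) * (Q n + δ) ^ ((i : ℝ) / n) := by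
    intro δ hδ
    have happ := seq_pos n hn K hK (fun j => Q j + δ)
      (fun j hj => by have := hnn j hj; positivity)
      (fun j hj1 hjn => by
        have h0 := hnn (j - 1) (by omega)
        have h2 := hnn (j + 1) (by omega)
        calc Q j + δ ≤ K * Real.sqrt (Q (j - 1) * Q (j + 1)) + K * δ := by
              have := hQ j hj1 hjn
              nlinarith [this, hδ.le, hK]
          _ = K * (Real.sqrt (Q (j - 1) * Q (j + 1)) + δ) := by ring
          _ ≤ K * Real.sqrt ((Q (j - 1) + δ) * (Q (j + 1) + δ)) := by
              exact mul_le_mul_of_nonneg_left (sqrt_mul_add _ _ _ h0 h2 hδ.le)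
                (le_of_lt (lt_of_lt_of_le one_pos hK)))
      i hi
    calc Q i ≤ Q i + δ := by linarith
      _ ≤ _ := happ
  have ht : Tendsto (fun δ : ℝ => K ^ (n * n) * (Q 0 + δ) ^ (1 - (i : ℝ) / n)
      * (Q n + δ) ^ ((i : ℝ) / n)) (nhdsWithin 0 (Set.Ioi 0))
      (nhds (K ^ (n * n) * Q 0 ^ (1 - (i : ℝ) / n) * Q n ^ ((i : ℝ) / n))) := by
    apply Tendsto.mono_left _ nhdsWithin_le_nhds
    have h0 : Tendsto (fun δ : ℝ => Q 0 + δ) (nhds 0) (nhds (Q 0 + 0)) :=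
      tendsto_const_nhds.add tendsto_id
    have hN : Tendsto (fun δ : ℝ => Q n + δ) (nhds 0) (nhds (Q n + 0)) :=
      tendsto_const_nhds.add tendsto_id
    rw [add_zero] at h0 hN
    exact (tendsto_const_nhds.mul (h0.rpow_const (Or.inr hθ1))).mul
      (hN.rpow_const (Or.inr hθ2))
  exact ge_of_tendsto ht (eventually_nhdsWithin_of_forall fun δ hδ => key δ hδ)

lemma taylor_bd (n : ℕ) (f : ℝ → ℝ) (hf : ContDiff ℝ n f)
    (hzero : ∀ j < n, iteratedDeriv j f 0 = 0) :
    ∃ M : ℝ, 0 ≤ M ∧ ∀ j ≤ n, ∀ y ∈ Icc (0 : ℝ) 1, |iteratedDeriv j f y| ≤ M * y ^ (n - j) := by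
  have hcn : Continuous (iteratedDeriv n f) := hf.continuous_iteratedDeriv n le_rfl
  obtain ⟨M0, hM0⟩ := isCompact_Icc.exists_bound_of_continuousOn
    (s := Icc (0:ℝ) 1) hcn.continuousOn
  refine ⟨max M0 0, le_max_right _ _, ?_⟩
  have claim : ∀ k, ∀ j, j + k = n → ∀ y ∈ Icc (0 : ℝ) 1,
      |iteratedDeriv j f y| ≤ max M0 0 * y ^ k := by
    intro k
    induction k with
    | zero =>
      intro j hj y hy
      have hj' : j = n := by omega
      subst hj'
      simpa [Real.norm_eq_abs] using le_trans (hM0 y hy) (le_max_left M0 0)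
    | succ k ih =>
      intro j hj y hy
      have hjn : j < n := by omega
      have hder : ∀ t : ℝ, HasDerivAt (iteratedDeriv j f) (iteratedDeriv (j + 1) f t) t := by
        intro t
        have hdiff : Differentiable ℝ (iteratedDeriv j f) :=
          hf.differentiable_iteratedDeriv j (by exact_mod_cast hjn)
        have := (hdiff t).hasDerivAt
        rwa [← iteratedDeriv_succ] at this
      have hbound : ∀ t ∈ Icc (0 : ℝ) y, ‖iteratedDeriv (j + 1) f t‖ ≤ max M0 0 * y ^ k := by
        intro t ht
        have ht1 : t ∈ Icc (0 : ℝ) 1 := ⟨ht.1, le_trans ht.2 hy.2⟩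
        calc ‖iteratedDeriv (j + 1) f t‖ = |iteratedDeriv (j + 1) f t| := rfl
          _ ≤ max M0 0 * t ^ k := by
              have := ih (j + 1) (by omega) t ht1
              simpa [show n - (j+1) = k by omega] using this
          _ ≤ max M0 0 * y ^ k :=
              mul_le_mul_of_nonneg_left (pow_le_pow_left₀ ht.1 ht.2 k) (le_max_right M0 0)
      have := Convex.norm_image_sub_le_of_norm_hasDerivWithin_le
        (f := iteratedDeriv j f) (f' := iteratedDeriv (j + 1) f)
        (fun t ht => (hder t).hasDerivWithinAt) hbound (convex_Icc 0 y)
        (left_mem_Icc.mpr hy.1) (right_mem_Icc.mpr hy.1)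
      rw [hzero j hjn, sub_zero, Real.norm_eq_abs] at this
      calc |iteratedDeriv j f y| ≤ max M0 0 * y ^ k * ‖y - 0‖ := this
        _ = max M0 0 * y ^ (k + 1) := by
            rw [sub_zero, Real.norm_eq_abs, abs_of_nonneg hy.1]; ring
  intro j hj y hy
  exact claim (n - j) j (by omega) y hy



noncomputable def F (n : ℕ) (f : ℝ → ℝ) (j : ℕ) (y : ℝ) : ℝ :=
  (iteratedDeriv j f y / y ^ (n - j)) ^ 2

noncomputable def Q (n : ℕ) (f : ℝ → ℝ) (j : ℕ) : ℝ :=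
  ∫ y in Set.Ioi (0 : ℝ), F n f j y

lemma F_nonneg (n : ℕ) (f : ℝ → ℝ) (j : ℕ) (y : ℝ) : 0 ≤ F n f j y := sq_nonneg _

lemma Q_nonneg (n : ℕ) (f : ℝ → ℝ) (j : ℕ) : 0 ≤ Q n f j :=
  integral_nonneg fun y => F_nonneg n f j y

lemma absorb (X Y δ : ℝ) (hX : 0 ≤ X) (hY : 0 ≤ Y) (hδ : 0 ≤ δ)
    (h : X ≤ δ + 2 * (Real.sqrt X * Real.sqrt Y)) : X ≤ 2 * δ + 4 * Y := by
  nlinarith [Real.sq_sqrt hX, Real.sq_sqrt hY, Real.sqrt_nonneg X, Real.sqrt_nonneg Y,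
    sq_nonneg (Real.sqrt X - 2 * Real.sqrt Y)]

lemma F_measurable (n : ℕ) (f : ℝ → ℝ) (hf : ContDiff ℝ n f) (j : ℕ) (hj : j ≤ n) :
    Measurable (F n f j) := by
  have h1 : Continuous (iteratedDeriv j f) := hf.continuous_iteratedDeriv j (by exact_mod_cast hj)
  exact (h1.measurable.div (measurable_id.pow_const (n - j))).pow_const 2

lemma F_eq_zpow (n : ℕ) (f : ℝ → ℝ) (k : ℕ) (hk : k ≤ n) {y : ℝ} (hy : y ≠ 0) :
    F n f k y = (iteratedDeriv k f y) ^ 2 * y ^ (-(2 * ((n : ℤ) - k))) := by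
  rw [F, div_pow, ← pow_mul, zpow_neg, div_eq_mul_inv]
  congr 2
  rw [← zpow_natCast y ((n - k) * 2)]
  congr 1
  omega

lemma F_contOn (n : ℕ) (f : ℝ → ℝ) (hf : ContDiff ℝ n f) (k : ℕ) (hk : k ≤ n)
    {s : Set ℝ} (hs : ∀ y ∈ s, y ≠ 0) : ContinuousOn (F n f k) s := by
  have h1 : Continuous (iteratedDeriv k f) := hf.continuous_iteratedDeriv k (by exact_mod_cast hk)
  apply ContinuousOn.pow
  exact h1.continuousOn.div (continuous_pow (n - k)).continuousOn
    fun y hy => pow_ne_zero _ (hs y hy)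

lemma F_integrableOn_Ioc (n : ℕ) (f : ℝ → ℝ) (hf : ContDiff ℝ n f) (k : ℕ) (hk : k ≤ n)
    {a b : ℝ} (ha : 0 < a) : IntegrableOn (F n f k) (Ioc a b) := by
  have h : IntegrableOn (F n f k) (Icc a b) volume := (F_contOn n f hf k hk (s := Icc a b)
    (fun y hy => ne_of_gt (lt_of_lt_of_le ha hy.1))).integrableOn_Icc
  exact h.mono_set Ioc_subset_Icc_self

/-- Cauchy–Schwarz for set integrals of real functions. -/
lemma cs_helper {s : Set ℝ} (hs : MeasurableSet s) (u v : ℝ → ℝ)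
    (hu : Measurable u) (hv : Measurable v)
    (hu2 : IntegrableOn (fun y => u y ^ 2) s) (hv2 : IntegrableOn (fun y => v y ^ 2) s) :
    ∫ y in s, |u y| * |v y| ≤
      Real.sqrt (∫ y in s, u y ^ 2) * Real.sqrt (∫ y in s, v y ^ 2) := by
  have habs : ∀ x : ℝ, |x| ^ (2 : ℝ) = x ^ 2 := by
    intro x
    rw [show (2 : ℝ) = ((2 : ℕ) : ℝ) by norm_num, Real.rpow_natCast, sq_abs]
  have hpq : (2 : ℝ).HolderConjugate 2 := Real.HolderConjugate.two_two
  have h2 : ENNReal.ofReal (2 : ℝ) = 2 := by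
    rw [ENNReal.ofReal_ofNat]
  have hmu : MemLp (fun y => |u y|) (ENNReal.ofReal (2 : ℝ)) (volume.restrict s) := by
    rw [h2]
    refine (memLp_two_iff_integrable_sq hu.abs.aestronglyMeasurable).mpr ?_
    simp only [sq_abs]
    exact hu2
  have hmv : MemLp (fun y => |v y|) (ENNReal.ofReal (2 : ℝ)) (volume.restrict s) := by
    rw [h2]
    refine (memLp_two_iff_integrable_sq hv.abs.aestronglyMeasurable).mpr ?_
    simp only [sq_abs]
    exact hv2
  have hH := integral_mul_le_Lp_mul_Lq_of_nonneg hpq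
    (Eventually.of_forall fun y => abs_nonneg (u y))
    (Eventually.of_forall fun y => abs_nonneg (v y)) hmu hmv
  simp only [habs, sq_abs] at hH
  calc ∫ y in s, |u y| * |v y|
      ≤ (∫ y in s, u y ^ 2) ^ ((1:ℝ)/2) * (∫ y in s, v y ^ 2) ^ ((1:ℝ)/2) := hH
    _ = Real.sqrt (∫ y in s, u y ^ 2) * Real.sqrt (∫ y in s, v y ^ 2) := by
        rw [Real.sqrt_eq_rpow, Real.sqrt_eq_rpow]

/-- The monotone exhaustion limit. -/
lemma tends_Q (n : ℕ) (f : ℝ → ℝ) (k : ℕ) (hint : IntegrableOn (F n f k) (Ioi 0)) :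
    Tendsto (fun N : ℕ => ∫ y in Ioc (1 / ((N : ℝ) + 1)) ((N : ℝ) + 1), F n f k y)
      atTop (nhds (Q n f k)) := by
  have hunion : ⋃ N : ℕ, Ioc (1 / ((N : ℝ) + 1)) ((N : ℝ) + 1) = Ioi (0 : ℝ) := by
    ext y
    simp only [mem_iUnion, mem_Ioc, mem_Ioi]
    constructor
    · rintro ⟨N, h1, _⟩
      exact lt_trans (by positivity) h1
    · intro hy
      obtain ⟨N, hN⟩ := exists_nat_gt (max y (1 / y))
      refine ⟨N, ?_, ?_⟩
      · rw [div_lt_iff₀ (by positivity)]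
        have h1 : 1 / y < (N : ℝ) + 1 :=
          lt_trans (lt_of_le_of_lt (le_max_right y (1 / y)) hN) (lt_add_one _)
        rw [div_lt_iff₀ hy] at h1
        linarith [h1]
      · exact le_of_lt (lt_trans (lt_of_le_of_lt (le_max_left y (1 / y)) hN) (lt_add_one _))
  have hmono : Monotone (fun N : ℕ => Ioc (1 / ((N : ℝ) + 1)) ((N : ℝ) + 1)) := by
    intro a b hab
    apply Ioc_subset_Ioc
    · apply one_div_le_one_div_of_le (by positivity)
      exact_mod_cast add_le_add_left (Nat.cast_le.mpr hab) 1
    · exact_mod_cast add_le_add_left (Nat.cast_le.mpr hab) 1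
  have h := tendsto_setIntegral_of_monotone (fun N => measurableSet_Ioc) hmono
    (hunion ▸ hint)
  rwa [hunion] at h

lemma hasDerivAt_iter (n : ℕ) (f : ℝ → ℝ) (hf : ContDiff ℝ n f) (j : ℕ) (hj : j < n) (t : ℝ) :
    HasDerivAt (iteratedDeriv j f) (iteratedDeriv (j + 1) f t) t := by
  have hdiff : Differentiable ℝ (iteratedDeriv j f) :=
    hf.differentiable_iteratedDeriv j (by exact_mod_cast hj)
  have h := (hdiff t).hasDerivAt
  rwa [← iteratedDeriv_succ] at h

lemma hardy_step (n : ℕ) (f : ℝ → ℝ) (hf : ContDiff ℝ n f) (j : ℕ) (hj : j < n)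
    (M : ℝ) (hM : 0 ≤ M)
    (hT : ∀ k ≤ n, ∀ y ∈ Icc (0 : ℝ) 1, |iteratedDeriv k f y| ≤ M * y ^ (n - k))
    (hint : IntegrableOn (F n f (j + 1)) (Ioi 0)) :
    IntegrableOn (F n f j) (Ioi 0) ∧ Q n f j ≤ 4 * Q n f (j + 1) := by
  have hm1 : 1 ≤ n - j := by omega
  set m := n - j with hm
  have hm' : n - (j + 1) = m - 1 := by omega
  have hcg : Continuous (iteratedDeriv j f) :=
    hf.continuous_iteratedDeriv j (by exact_mod_cast hj.le)
  have hcg' : Continuous (iteratedDeriv (j + 1) f) :=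
    hf.continuous_iteratedDeriv (j + 1) (by exact_mod_cast hj)
  set e : ℤ := 1 - 2 * m with he
  have heneg : e ≤ -1 := by omega
  have he0 : (e : ℝ) ≠ 0 := by
    have h : e ≠ 0 := by omega
    exact_mod_cast h
  have heR : (e : ℝ) ≤ -1 := by exact_mod_cast heneg
  clear_value m e
  set Y := ∫ y in Ioi (0 : ℝ), F n f (j + 1) y with hY
  have hQY : Q n f (j + 1) = Y := rfl
  have hY0 : 0 ≤ Y := integral_nonneg fun y => F_nonneg n f (j + 1) y
  -- the FTC identity
  have hFTC : ∀ ε R : ℝ, 0 < ε → ε ≤ R →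
      ∫ y in ε..R, (iteratedDeriv j f y) ^ 2 * (y : ℝ) ^ (e - 1) =
        (iteratedDeriv j f R) ^ 2 * (R : ℝ) ^ e / e
          - (iteratedDeriv j f ε) ^ 2 * (ε : ℝ) ^ e / e
          - (2 / (e : ℝ)) * ∫ y in ε..R, iteratedDeriv j f y * iteratedDeriv (j + 1) f y
              * (y : ℝ) ^ e := by
    intro ε R hε hεR
    have hne : ∀ y ∈ uIcc ε R, y ≠ 0 := by
      rw [uIcc_of_le hεR]
      exact fun y hy => ne_of_gt (lt_of_lt_of_le hε hy.1)
    have hderH : ∀ y ∈ uIcc ε R,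
        HasDerivAt (fun t => (iteratedDeriv j f t) ^ 2 * (t : ℝ) ^ e / e)
          ((iteratedDeriv j f y) ^ 2 * (y : ℝ) ^ (e - 1)
            + (2 / (e : ℝ)) * (iteratedDeriv j f y * iteratedDeriv (j + 1) f y * (y : ℝ) ^ e))
          y := by
      intro y hy
      have h1 : HasDerivAt (fun t => (iteratedDeriv j f t) ^ 2)
          (2 * iteratedDeriv j f y * iteratedDeriv (j + 1) f y) y := by
        have h0 := (hasDerivAt_iter n f hf j hj y).fun_pow 2
        simpa [pow_one] using h0
      have h2 : HasDerivAt (fun t : ℝ => (t : ℝ) ^ e) ((e : ℝ) * y ^ (e - 1)) y :=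
        hasDerivAt_zpow e y (Or.inl (hne y hy))
      have h3 := (h1.fun_mul h2).div_const (e : ℝ)
      refine h3.congr_deriv ?_
      field_simp
      ring
    have hcont1 : ContinuousOn (fun y : ℝ => (iteratedDeriv j f y) ^ 2 * (y : ℝ) ^ (e - 1))
        (uIcc ε R) :=
      (hcg.continuousOn.pow 2).mul
        (continuousOn_id.zpow₀ _ fun y hy => Or.inl (hne y hy))
    have hcont2 : ContinuousOn
        (fun y : ℝ => iteratedDeriv j f y * iteratedDeriv (j + 1) f y * (y : ℝ) ^ e)
        (uIcc ε R) :=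
      (hcg.continuousOn.mul hcg'.continuousOn).mul
        (continuousOn_id.zpow₀ _ fun y hy => Or.inl (hne y hy))
    have hii : IntervalIntegrable (fun y : ℝ =>
        (iteratedDeriv j f y) ^ 2 * (y : ℝ) ^ (e - 1)
          + (2 / (e : ℝ)) * (iteratedDeriv j f y * iteratedDeriv (j + 1) f y * (y : ℝ) ^ e))
        volume ε R :=
      (hcont1.add (continuousOn_const.mul hcont2)).intervalIntegrable
    have key := intervalIntegral.integral_eq_sub_of_hasDerivAt hderH hii
    rw [intervalIntegral.integral_add hcont1.intervalIntegrable
      ((continuousOn_const.fun_mul hcont2).intervalIntegrable),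
      intervalIntegral.integral_const_mul] at key
    linarith [key]
  -- the main estimate on Ioc ε R
  have hbound : ∀ ε R : ℝ, 0 < ε → ε ≤ 1 → 1 ≤ R →
      ∫ y in Ioc ε R, F n f j y ≤ 2 * (M ^ 2 * ε) + 4 * Y := by
    intro ε R hε hε1 hR
    have hεR : ε ≤ R := hε1.trans hR
    set X := ∫ y in Ioc ε R, F n f j y with hX
    have hX0 : 0 ≤ X := setIntegral_nonneg measurableSet_Ioc fun y _ => F_nonneg n f j y
    have hXint : ∫ y in ε..R, (iteratedDeriv j f y) ^ 2 * (y : ℝ) ^ (e - 1) = X := by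
      rw [hX, intervalIntegral.integral_of_le hεR]
      apply setIntegral_congr_fun measurableSet_Ioc
      intro y hy
      have hy0 : y ≠ 0 := ne_of_gt (lt_trans hε hy.1)
      have hexp : e - 1 = -(2 * ((n : ℤ) - j)) := by omega
      rw [F_eq_zpow n f j hj.le hy0, hexp]
    -- Cauchy-Schwarz for the cross term
    have hcross_eq : ∀ y ∈ Ioc ε R,
        |iteratedDeriv j f y * iteratedDeriv (j + 1) f y * (y : ℝ) ^ e|
          = |iteratedDeriv j f y / y ^ m| * |iteratedDeriv (j + 1) f y / y ^ (m - 1)| := by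
      intro y hy
      have hy0 : 0 < y := lt_trans hε hy.1
      rw [← abs_mul]
      congr 1
      have hze : (y : ℝ) ^ e = ((y : ℝ) ^ (m + (m - 1) : ℕ))⁻¹ := by
        have h9 : e = -((m + (m - 1) : ℕ) : ℤ) := by omega
        rw [h9, zpow_neg, zpow_natCast]
      have hym : (y : ℝ) ^ m ≠ 0 := pow_ne_zero _ (ne_of_gt hy0)
      have hym' : (y : ℝ) ^ (m - 1) ≠ 0 := pow_ne_zero _ (ne_of_gt hy0)
      rw [hze, pow_add]
      field_simp
      all_goals ring
    have hcs : ∫ y in Ioc ε R,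
        |iteratedDeriv j f y / y ^ m| * |iteratedDeriv (j + 1) f y / y ^ (m - 1)|
          ≤ Real.sqrt X * Real.sqrt Y := by
      have h1 := cs_helper (s := Ioc ε R) measurableSet_Ioc
        (fun y => iteratedDeriv j f y / y ^ m)
        (fun y => iteratedDeriv (j + 1) f y / y ^ (m - 1))
        (hcg.measurable.div (measurable_id.pow_const m))
        (hcg'.measurable.div (measurable_id.pow_const (m - 1)))
        (by
          have h := F_integrableOn_Ioc n f hf j hj.le (a := ε) (b := R) hε
          have heqf : F n f j = fun y => (iteratedDeriv j f y / y ^ m) ^ 2 := by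
            funext y
            simp only [F]
            rw [← hm]
          rwa [heqf] at h)
        (by
          have h := F_integrableOn_Ioc n f hf (j + 1) (by omega) (a := ε) (b := R) hε
          have heqf : F n f (j + 1) = fun y => (iteratedDeriv (j + 1) f y / y ^ (m - 1)) ^ 2 := by
            funext y
            simp only [F]
            rw [hm']
          rwa [heqf] at h)
      refine h1.trans ?_
      have h3 : Real.sqrt (∫ y in Ioc ε R, (iteratedDeriv (j + 1) f y / y ^ (m - 1)) ^ 2)
          ≤ Real.sqrt Y := by
        apply Real.sqrt_le_sqrt
        have heq : ∫ y in Ioc ε R, (iteratedDeriv (j + 1) f y / y ^ (m - 1)) ^ 2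
            = ∫ y in Ioc ε R, F n f (j + 1) y := by
          apply setIntegral_congr_fun measurableSet_Ioc
          intro y _
          simp only [F]
          rw [hm']
        rw [heq, hY]
        apply setIntegral_mono_set hint
          (Eventually.of_forall fun y => F_nonneg n f (j + 1) y)
          (HasSubset.Subset.eventuallyLE fun y hy => lt_trans hε hy.1)
      have h2 : (∫ y in Ioc ε R, (iteratedDeriv j f y / y ^ m) ^ 2) = X := by
        rw [hX]
        apply setIntegral_congr_fun measurableSet_Ioc
        intro y _
        simp only [F]
        rw [← hm]
      rw [h2]
      exact mul_le_mul_of_nonneg_left h3 (Real.sqrt_nonneg _)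
    -- boundary terms
    have hHR : (iteratedDeriv j f R) ^ 2 * (R : ℝ) ^ e / e ≤ 0 := by
      apply div_nonpos_of_nonneg_of_nonpos
      · exact mul_nonneg (sq_nonneg _) (zpow_nonneg (by linarith : (0:ℝ) ≤ R) e)
      · linarith
    have hHε : -((iteratedDeriv j f ε) ^ 2 * (ε : ℝ) ^ e / e) ≤ M ^ 2 * ε := by
      have hTε := hT j hj.le ε ⟨hε.le, hε1⟩
      have hsq : (iteratedDeriv j f ε) ^ 2 ≤ M ^ 2 * ε ^ (2 * m) := by
        have h1 : |iteratedDeriv j f ε| ^ 2 ≤ (M * ε ^ m) ^ 2 := by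
          apply pow_le_pow_left₀ (abs_nonneg _)
          rw [hm]
          exact hTε
        rw [sq_abs] at h1
        calc (iteratedDeriv j f ε) ^ 2 ≤ (M * ε ^ m) ^ 2 := h1
          _ = M ^ 2 * ε ^ (2 * m) := by rw [mul_pow, ← pow_mul, Nat.mul_comm]
      have hz : (ε : ℝ) ^ (2 * m : ℕ) * (ε : ℝ) ^ e = ε := by
        rw [← zpow_natCast ε (2 * m), ← zpow_add₀ (ne_of_gt hε)]
        rw [show ((2 * m : ℕ) : ℤ) + e = 1 by omega]
        exact zpow_one ε
      have hznn : (0:ℝ) ≤ (ε : ℝ) ^ e := zpow_nonneg hε.le e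
      calc -((iteratedDeriv j f ε) ^ 2 * (ε : ℝ) ^ e / e)
          = ((iteratedDeriv j f ε) ^ 2 * (ε : ℝ) ^ e) / (-(e : ℝ)) := by ring
        _ ≤ (iteratedDeriv j f ε) ^ 2 * (ε : ℝ) ^ e :=
            div_le_self (mul_nonneg (sq_nonneg _) hznn) (by linarith)
        _ ≤ (M ^ 2 * ε ^ (2 * m)) * (ε : ℝ) ^ e := mul_le_mul_of_nonneg_right hsq hznn
        _ = M ^ 2 * ((ε : ℝ) ^ (2 * m : ℕ) * (ε : ℝ) ^ e) := by ring
        _ = M ^ 2 * ε := by rw [hz]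
    -- cross term bound
    have hB : |(2 / (e : ℝ)) * ∫ y in ε..R, iteratedDeriv j f y * iteratedDeriv (j + 1) f y
        * (y : ℝ) ^ e| ≤ 2 * (Real.sqrt X * Real.sqrt Y) := by
      rw [abs_mul]
      have h1 : |(2 / (e : ℝ))| ≤ 2 := by
        rw [abs_div, abs_of_nonneg (by norm_num : (0:ℝ) ≤ 2)]
        apply div_le_self (by norm_num)
        rw [abs_of_nonpos (by linarith : (e:ℝ) ≤ 0)]
        linarith
      have h2 : |∫ y in ε..R, iteratedDeriv j f y * iteratedDeriv (j + 1) f y * (y : ℝ) ^ e|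
          ≤ Real.sqrt X * Real.sqrt Y := by
        calc |∫ y in ε..R, iteratedDeriv j f y * iteratedDeriv (j + 1) f y * (y : ℝ) ^ e|
            ≤ ∫ y in ε..R, |iteratedDeriv j f y * iteratedDeriv (j + 1) f y * (y : ℝ) ^ e| :=
              intervalIntegral.abs_integral_le_integral_abs hεR
          _ = ∫ y in Ioc ε R,
              |iteratedDeriv j f y / y ^ m| * |iteratedDeriv (j + 1) f y / y ^ (m - 1)| := by
              rw [intervalIntegral.integral_of_le hεR]
              exact setIntegral_congr_fun measurableSet_Ioc hcross_eq
          _ ≤ Real.sqrt X * Real.sqrt Y := hcs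
      exact mul_le_mul h1 h2 (abs_nonneg _) (by norm_num)
    have hid := hFTC ε R hε hεR
    rw [hXint] at hid
    have hXle : X ≤ M ^ 2 * ε + 2 * (Real.sqrt X * Real.sqrt Y) := by
      have hneg := neg_le_abs ((2 / (e : ℝ)) * ∫ y in ε..R, iteratedDeriv j f y
        * iteratedDeriv (j + 1) f y * (y : ℝ) ^ e)
      linarith [hid, hHR, hHε, hB, hneg]
    exact absorb X Y (M ^ 2 * ε) hX0 hY0 (by positivity) hXle
  -- integrability on (0, 1]
  have hmeas : Measurable (F n f j) := F_measurable n f hf j hj.le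
  have hint1 : IntegrableOn (F n f j) (Ioc 0 1) := by
    apply Integrable.mono' (integrable_const (M ^ 2)) hmeas.aestronglyMeasurable
    filter_upwards [ae_restrict_mem measurableSet_Ioc] with y hy
    rw [Real.norm_eq_abs, abs_of_nonneg (F_nonneg n f j y)]
    have hTy := hT j hj.le y ⟨hy.1.le, hy.2⟩
    have hym : (0:ℝ) < y ^ m := pow_pos hy.1 m
    have h1 : |iteratedDeriv j f y / y ^ m| ≤ M := by
      rw [abs_div, abs_of_pos hym, div_le_iff₀ hym]
      calc |iteratedDeriv j f y| ≤ M * y ^ (n - j) := hTy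
        _ = M * y ^ m := by rw [← hm]
    have h2 : F n f j y = (iteratedDeriv j f y / y ^ m) ^ 2 := by
      simp only [F]
      rw [← hm]
    rw [h2]
    calc (iteratedDeriv j f y / y ^ m) ^ 2 = |iteratedDeriv j f y / y ^ m| ^ 2 := (sq_abs _).symm
      _ ≤ M ^ 2 := pow_le_pow_left₀ (abs_nonneg _) h1 2
  -- integrability on (1, ∞)
  have hint2 : IntegrableOn (F n f j) (Ioi 1) := by
    apply integrableOn_Ioi_of_intervalIntegral_norm_bounded (2 * (M ^ 2 * 1) + 4 * Y) 1
      (fun k : ℕ => F_integrableOn_Ioc n f hf j hj.le (a := (1:ℝ)) (b := (k : ℝ)) one_pos)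
      tendsto_natCast_atTop_atTop
    filter_upwards [eventually_ge_atTop 1] with k hk
    have hk1 : (1:ℝ) ≤ (k:ℝ) := by exact_mod_cast hk
    have heq : ∫ x in (1:ℝ)..(k:ℝ), ‖F n f j x‖ = ∫ y in Ioc (1:ℝ) (k:ℝ), F n f j y := by
      rw [intervalIntegral.integral_of_le hk1]
      exact setIntegral_congr_fun measurableSet_Ioc
        fun y _ => Real.norm_of_nonneg (F_nonneg n f j y)
    rw [heq]
    exact hbound 1 (k:ℝ) one_pos le_rfl hk1
  have hIoi : IntegrableOn (F n f j) (Ioi 0) := by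
    have h := hint1.union hint2
    rwa [Ioc_union_Ioi_eq_Ioi (by norm_num : (0:ℝ) ≤ 1)] at h
  refine ⟨hIoi, ?_⟩
  have htd := tends_Q n f j hIoi
  have hub : ∀ N : ℕ, ∫ y in Ioc (1/((N:ℝ)+1)) ((N:ℝ)+1), F n f j y
      ≤ 2 * (M ^ 2 * (1/((N:ℝ)+1))) + 4 * Y := by
    intro N
    apply hbound _ _ (by positivity)
    · rw [div_le_one (by positivity)]
      linarith [Nat.cast_nonneg (α := ℝ) N]
    · linarith [Nat.cast_nonneg (α := ℝ) N]
  have htd2 : Tendsto (fun N : ℕ => 2 * (M ^ 2 * (1/((N:ℝ)+1))) + 4 * Y) atTop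
      (nhds (2 * (M ^ 2 * 0) + 4 * Y)) := by
    apply Tendsto.add _ tendsto_const_nhds
    exact tendsto_const_nhds.mul (tendsto_const_nhds.mul tendsto_one_div_add_atTop_nhds_zero_nat)
  have hfin := le_of_tendsto_of_tendsto' htd htd2 hub
  rw [hQY]
  simpa using hfin

lemma ibp_step (n : ℕ) (f : ℝ → ℝ) (hf : ContDiff ℝ n f) (a : ℕ) (ha : a + 2 ≤ n)
    (M : ℝ) (hM : 0 ≤ M)
    (hT : ∀ k ≤ n, ∀ y ∈ Icc (0 : ℝ) 1, |iteratedDeriv k f y| ≤ M * y ^ (n - k))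
    (hAll : ∀ j ≤ n, IntegrableOn (F n f j) (Ioi 0)) :
    Q n f (a + 1) ≤ Real.sqrt (Q n f a * Q n f (a + 2)) +
      2 * n * Real.sqrt (Q n f a * Q n f (a + 1)) := by
  set m := n - (a + 1) with hm
  have hm1 : 1 ≤ m := by omega
  have hca : Continuous (iteratedDeriv a f) :=
    hf.continuous_iteratedDeriv a (by exact_mod_cast (by omega : a ≤ n))
  have hca1 : Continuous (iteratedDeriv (a + 1) f) :=
    hf.continuous_iteratedDeriv (a + 1) (by exact_mod_cast (by omega : a + 1 ≤ n))
  have hca2 : Continuous (iteratedDeriv (a + 2) f) :=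
    hf.continuous_iteratedDeriv (a + 2) (by exact_mod_cast ha)
  set e : ℤ := -(2 * m) with he
  have he0 : (e : ℝ) ≤ 0 := by
    have h : e ≤ 0 := by omega
    exact_mod_cast h
  clear_value m e
  -- the measurable weighted functions
  have humeas : ∀ b : ℕ, b ≤ n → Measurable (fun y : ℝ => iteratedDeriv b f y / y ^ (n - b)) :=
    fun b hb => (hf.continuous_iteratedDeriv b (by exact_mod_cast hb)).measurable.div
      (measurable_id.pow_const (n - b))
  -- integrable products
  have hprod : ∀ b c : ℕ, b ≤ n → c ≤ n → IntegrableOn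
      (fun y : ℝ => |iteratedDeriv b f y / y ^ (n - b)| * |iteratedDeriv c f y / y ^ (n - c)|)
      (Ioi 0) := by
    intro b c hb hc
    apply Integrable.mono' (((hAll b hb).add (hAll c hc)).div_const 2)
      (((humeas b hb).abs.fun_mul (humeas c hc).abs).aestronglyMeasurable)
    apply Eventually.of_forall
    intro y
    rw [Real.norm_of_nonneg (mul_nonneg (abs_nonneg _) (abs_nonneg _))]
    simp only [F, Pi.add_apply]
    nlinarith [sq_nonneg (|iteratedDeriv b f y / y ^ (n - b)| - |iteratedDeriv c f y / y ^ (n - c)|),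
      sq_abs (iteratedDeriv b f y / y ^ (n - b)), sq_abs (iteratedDeriv c f y / y ^ (n - c)),
      abs_nonneg (iteratedDeriv b f y / y ^ (n - b)), abs_nonneg (iteratedDeriv c f y / y ^ (n - c))]
  -- global Cauchy-Schwarz
  have hCS : ∀ b c : ℕ, b ≤ n → c ≤ n →
      ∫ y in Ioi (0:ℝ), |iteratedDeriv b f y / y ^ (n - b)| * |iteratedDeriv c f y / y ^ (n - c)|
        ≤ Real.sqrt (Q n f b) * Real.sqrt (Q n f c) := by
    intro b c hb hc
    have h1 := cs_helper (s := Ioi (0:ℝ)) measurableSet_Ioi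
      (fun y => iteratedDeriv b f y / y ^ (n - b))
      (fun y => iteratedDeriv c f y / y ^ (n - c))
      (humeas b hb) (humeas c hc)
      (hAll b hb)
      (hAll c hc)
    simpa only [F, Q] using h1
  -- pointwise identities
  have habs1 : ∀ y : ℝ, 0 < y →
      |iteratedDeriv a f y * iteratedDeriv (a + 2) f y * (y:ℝ) ^ e|
        = |iteratedDeriv a f y / y ^ (n - a)| * |iteratedDeriv (a + 2) f y / y ^ (n - (a + 2))| := by
    intro y hy
    rw [← abs_mul]
    congr 1
    have h9 : e = -(((n - a) + (n - (a + 2)) : ℕ) : ℤ) := by omega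
    have hy1 : (y:ℝ) ^ (n - a) ≠ 0 := pow_ne_zero _ (ne_of_gt hy)
    have hy2 : (y:ℝ) ^ (n - (a + 2)) ≠ 0 := pow_ne_zero _ (ne_of_gt hy)
    rw [h9, zpow_neg, zpow_natCast, pow_add]
    field_simp
    all_goals ring
  have habs2 : ∀ y : ℝ, 0 < y →
      |iteratedDeriv a f y * iteratedDeriv (a + 1) f y * (y:ℝ) ^ (e - 1)|
        = |iteratedDeriv a f y / y ^ (n - a)| * |iteratedDeriv (a + 1) f y / y ^ (n - (a + 1))| := by
    intro y hy
    rw [← abs_mul]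
    congr 1
    have h9 : e - 1 = -(((n - a) + (n - (a + 1)) : ℕ) : ℤ) := by omega
    have hy1 : (y:ℝ) ^ (n - a) ≠ 0 := pow_ne_zero _ (ne_of_gt hy)
    have hy2 : (y:ℝ) ^ (n - (a + 1)) ≠ 0 := pow_ne_zero _ (ne_of_gt hy)
    rw [h9, zpow_neg, zpow_natCast, pow_add]
    field_simp
    all_goals ring
  -- FTC identity
  have hFTC : ∀ ε R : ℝ, 0 < ε → ε ≤ R →
      ∫ y in ε..R, (iteratedDeriv (a + 1) f y) ^ 2 * (y : ℝ) ^ e =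
        iteratedDeriv a f R * iteratedDeriv (a + 1) f R * (R : ℝ) ^ e
          - iteratedDeriv a f ε * iteratedDeriv (a + 1) f ε * (ε : ℝ) ^ e
          - (∫ y in ε..R, iteratedDeriv a f y * iteratedDeriv (a + 2) f y * (y : ℝ) ^ e)
          - (e : ℝ) * ∫ y in ε..R, iteratedDeriv a f y * iteratedDeriv (a + 1) f y
              * (y : ℝ) ^ (e - 1) := by
    intro ε R hε hεR
    have hne : ∀ y ∈ uIcc ε R, y ≠ 0 := by
      rw [uIcc_of_le hεR]
      exact fun y hy => ne_of_gt (lt_of_lt_of_le hε hy.1)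
    have hderH : ∀ y ∈ uIcc ε R,
        HasDerivAt (fun t => iteratedDeriv a f t * iteratedDeriv (a + 1) f t * (t : ℝ) ^ e)
          ((iteratedDeriv (a + 1) f y) ^ 2 * (y : ℝ) ^ e
            + (iteratedDeriv a f y * iteratedDeriv (a + 2) f y * (y : ℝ) ^ e
              + (e : ℝ) * (iteratedDeriv a f y * iteratedDeriv (a + 1) f y * (y : ℝ) ^ (e - 1))))
          y := by
      intro y hy
      have h1 := (hasDerivAt_iter n f hf a (by omega) y).fun_mul
        (hasDerivAt_iter n f hf (a + 1) (by omega) y)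
      have h2 : HasDerivAt (fun t : ℝ => (t : ℝ) ^ e) ((e : ℝ) * y ^ (e - 1)) y :=
        hasDerivAt_zpow e y (Or.inl (hne y hy))
      have h3 := h1.fun_mul h2
      have h4 : a + 1 + 1 = a + 2 := rfl
      rw [h4] at h3
      refine h3.congr_deriv ?_
      ring
    have hc1 : ContinuousOn (fun y : ℝ => (iteratedDeriv (a + 1) f y) ^ 2 * (y : ℝ) ^ e)
        (uIcc ε R) :=
      (hca1.continuousOn.pow 2).mul
        (continuousOn_id.zpow₀ _ fun y hy => Or.inl (hne y hy))
    have hc2 : ContinuousOn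
        (fun y : ℝ => iteratedDeriv a f y * iteratedDeriv (a + 2) f y * (y : ℝ) ^ e)
        (uIcc ε R) :=
      (hca.continuousOn.mul hca2.continuousOn).mul
        (continuousOn_id.zpow₀ _ fun y hy => Or.inl (hne y hy))
    have hc3 : ContinuousOn
        (fun y : ℝ => iteratedDeriv a f y * iteratedDeriv (a + 1) f y * (y : ℝ) ^ (e - 1))
        (uIcc ε R) :=
      (hca.continuousOn.mul hca1.continuousOn).mul
        (continuousOn_id.zpow₀ _ fun y hy => Or.inl (hne y hy))
    have hii : IntervalIntegrable (fun y : ℝ =>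
        (iteratedDeriv (a + 1) f y) ^ 2 * (y : ℝ) ^ e
          + (iteratedDeriv a f y * iteratedDeriv (a + 2) f y * (y : ℝ) ^ e
            + (e : ℝ) * (iteratedDeriv a f y * iteratedDeriv (a + 1) f y * (y : ℝ) ^ (e - 1))))
        volume ε R :=
      (hc1.add (hc2.add (continuousOn_const.mul hc3))).intervalIntegrable
    have key := intervalIntegral.integral_eq_sub_of_hasDerivAt hderH hii
    rw [intervalIntegral.integral_add hc1.intervalIntegrable
        (hc2.fun_add (continuousOn_const.fun_mul hc3)).intervalIntegrable,
      intervalIntegral.integral_add hc2.intervalIntegrable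
        (continuousOn_const.fun_mul hc3).intervalIntegrable,
      intervalIntegral.integral_const_mul] at key
    linarith [key]
  -- abbreviations
  set C1 := Real.sqrt (Q n f a) * Real.sqrt (Q n f (a + 2)) with hC1
  set C2 := Real.sqrt (Q n f a) * Real.sqrt (Q n f (a + 1)) with hC2
  -- main bound
  have hbound : ∀ ε R : ℝ, 0 < ε → ε ≤ 1 → 1 ≤ R →
      ∫ y in Ioc ε R, F n f (a + 1) y ≤
        |iteratedDeriv a f R * iteratedDeriv (a + 1) f R * (R : ℝ) ^ e|
          + M ^ 2 * ε + C1 + 2 * n * C2 := by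
    intro ε R hε hε1 hR
    have hεR : ε ≤ R := hε1.trans hR
    have hXint : ∫ y in ε..R, (iteratedDeriv (a + 1) f y) ^ 2 * (y : ℝ) ^ e
        = ∫ y in Ioc ε R, F n f (a + 1) y := by
      rw [intervalIntegral.integral_of_le hεR]
      apply setIntegral_congr_fun measurableSet_Ioc
      intro y hy
      have hy0 : y ≠ 0 := ne_of_gt (lt_trans hε hy.1)
      have h9 : e = -(2 * ((n : ℤ) - (a + 1))) := by omega
      simp only [F]
      rw [div_pow, ← pow_mul, h9]
      rw [show (2 * ((n:ℤ) - (a+1))) = (((n - (a+1)) * 2 : ℕ) : ℤ) by omega]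
      rw [zpow_neg, zpow_natCast, div_eq_mul_inv]
    -- bound for cross term 1
    have hcr1 : |∫ y in ε..R, iteratedDeriv a f y * iteratedDeriv (a + 2) f y * (y : ℝ) ^ e|
        ≤ C1 := by
      calc |∫ y in ε..R, iteratedDeriv a f y * iteratedDeriv (a + 2) f y * (y : ℝ) ^ e|
          ≤ ∫ y in ε..R, |iteratedDeriv a f y * iteratedDeriv (a + 2) f y * (y : ℝ) ^ e| :=
            intervalIntegral.abs_integral_le_integral_abs hεR
        _ = ∫ y in Ioc ε R, |iteratedDeriv a f y / y ^ (n - a)|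
              * |iteratedDeriv (a + 2) f y / y ^ (n - (a + 2))| := by
            rw [intervalIntegral.integral_of_le hεR]
            exact setIntegral_congr_fun measurableSet_Ioc
              fun y hy => habs1 y (lt_trans hε hy.1)
        _ ≤ ∫ y in Ioi (0:ℝ), |iteratedDeriv a f y / y ^ (n - a)|
              * |iteratedDeriv (a + 2) f y / y ^ (n - (a + 2))| := by
            apply setIntegral_mono_set (hprod a (a + 2) (by omega) ha)
              (Eventually.of_forall fun y => mul_nonneg (abs_nonneg _) (abs_nonneg _))
              (HasSubset.Subset.eventuallyLE fun y hy => lt_trans hε hy.1)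
        _ ≤ C1 := hCS a (a + 2) (by omega) ha
    -- bound for cross term 2
    have hcr2 : |(e:ℝ) * ∫ y in ε..R, iteratedDeriv a f y * iteratedDeriv (a + 1) f y
        * (y : ℝ) ^ (e - 1)| ≤ 2 * n * C2 := by
      rw [abs_mul]
      have h1 : |(e : ℝ)| ≤ 2 * n := by
        rw [abs_of_nonpos he0]
        have h2 : -e ≤ 2 * (n : ℤ) := by omega
        have h3 : ((-e : ℤ) : ℝ) ≤ ((2 * (n:ℤ) : ℤ) : ℝ) := by exact_mod_cast h2
        push_cast at h3 ⊢
        linarith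
      have h2 : |∫ y in ε..R, iteratedDeriv a f y * iteratedDeriv (a + 1) f y
          * (y : ℝ) ^ (e - 1)| ≤ C2 := by
        calc |∫ y in ε..R, iteratedDeriv a f y * iteratedDeriv (a + 1) f y * (y : ℝ) ^ (e - 1)|
            ≤ ∫ y in ε..R, |iteratedDeriv a f y * iteratedDeriv (a + 1) f y * (y : ℝ) ^ (e - 1)| :=
              intervalIntegral.abs_integral_le_integral_abs hεR
          _ = ∫ y in Ioc ε R, |iteratedDeriv a f y / y ^ (n - a)|
                * |iteratedDeriv (a + 1) f y / y ^ (n - (a + 1))| := by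
              rw [intervalIntegral.integral_of_le hεR]
              exact setIntegral_congr_fun measurableSet_Ioc
                fun y hy => habs2 y (lt_trans hε hy.1)
          _ ≤ ∫ y in Ioi (0:ℝ), |iteratedDeriv a f y / y ^ (n - a)|
                * |iteratedDeriv (a + 1) f y / y ^ (n - (a + 1))| := by
              apply setIntegral_mono_set (hprod a (a + 1) (by omega) (by omega))
                (Eventually.of_forall fun y => mul_nonneg (abs_nonneg _) (abs_nonneg _))
                (HasSubset.Subset.eventuallyLE fun y hy => lt_trans hε hy.1)
          _ ≤ C2 := hCS a (a + 1) (by omega) (by omega)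
      exact mul_le_mul h1 h2 (abs_nonneg _) (by positivity)
    -- boundary at ε
    have hbd : |iteratedDeriv a f ε * iteratedDeriv (a + 1) f ε * (ε : ℝ) ^ e| ≤ M ^ 2 * ε := by
      have hz : (ε:ℝ) ^ (n - a : ℕ) * (ε:ℝ) ^ (n - (a+1) : ℕ) * (ε:ℝ) ^ e = ε := by
        rw [← zpow_natCast ε (n - a), ← zpow_natCast ε (n - (a+1)), ← zpow_add₀ (ne_of_gt hε),
          ← zpow_add₀ (ne_of_gt hε)]
        rw [show ((n - a : ℕ) : ℤ) + ((n - (a+1) : ℕ) : ℤ) + e = 1 by omega]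
        exact zpow_one ε
      have hT1 := hT a (by omega) ε ⟨hε.le, hε1⟩
      have hT2 := hT (a + 1) (by omega) ε ⟨hε.le, hε1⟩
      have hznn : (0:ℝ) ≤ (ε:ℝ) ^ e := zpow_nonneg hε.le e
      calc |iteratedDeriv a f ε * iteratedDeriv (a + 1) f ε * (ε : ℝ) ^ e|
          = |iteratedDeriv a f ε| * |iteratedDeriv (a + 1) f ε| * (ε : ℝ) ^ e := by
            rw [abs_mul, abs_mul, abs_of_nonneg hznn]
        _ ≤ (M * ε ^ (n - a)) * (M * ε ^ (n - (a + 1))) * (ε : ℝ) ^ e := by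
            apply mul_le_mul_of_nonneg_right _ hznn
            exact mul_le_mul hT1 hT2 (abs_nonneg _) (by positivity)
        _ = M ^ 2 * ((ε:ℝ) ^ (n - a : ℕ) * (ε:ℝ) ^ (n - (a+1) : ℕ) * (ε:ℝ) ^ e) := by ring
        _ = M ^ 2 * ε := by rw [hz]
    -- combine
    rw [← hXint]
    have hid := hFTC ε R hε hεR
    have hn1 := neg_le_abs (iteratedDeriv a f R * iteratedDeriv (a + 1) f R * (R : ℝ) ^ e)
    have hn1' := le_abs_self (iteratedDeriv a f R * iteratedDeriv (a + 1) f R * (R : ℝ) ^ e)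
    have hn2 := neg_le_abs (iteratedDeriv a f ε * iteratedDeriv (a + 1) f ε * (ε : ℝ) ^ e)
    have hn2' := le_abs_self (iteratedDeriv a f ε * iteratedDeriv (a + 1) f ε * (ε : ℝ) ^ e)
    have hn3 := neg_le_abs (∫ y in ε..R, iteratedDeriv a f y * iteratedDeriv (a + 2) f y
      * (y : ℝ) ^ e)
    have hn3' := le_abs_self (∫ y in ε..R, iteratedDeriv a f y * iteratedDeriv (a + 2) f y
      * (y : ℝ) ^ e)
    have hn4 := neg_le_abs ((e:ℝ) * ∫ y in ε..R, iteratedDeriv a f y * iteratedDeriv (a + 1) f y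
      * (y : ℝ) ^ (e - 1))
    have hn4' := le_abs_self ((e:ℝ) * ∫ y in ε..R, iteratedDeriv a f y
      * iteratedDeriv (a + 1) f y * (y : ℝ) ^ (e - 1))
    linarith [hid, hcr1, hcr2, hbd]
  -- choose the escape sequence
  have hHfun : ∀ y : ℝ, 0 < y →
      |iteratedDeriv a f y * iteratedDeriv (a + 1) f y * (y:ℝ) ^ e|
        = (|iteratedDeriv a f y / y ^ (n - a)| * |iteratedDeriv (a + 1) f y / y ^ (n - (a+1))|)
            * y := by
    intro y hy
    have h1 := habs2 y hy
    have h2 : (y:ℝ) ^ e = (y:ℝ) ^ (e - 1) * y := by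
      rw [← zpow_add_one₀ (ne_of_gt hy)]
      congr 1
      omega
    have h5 : iteratedDeriv a f y * iteratedDeriv (a + 1) f y * ((y:ℝ) ^ (e-1) * y)
        = (iteratedDeriv a f y * iteratedDeriv (a + 1) f y * (y:ℝ) ^ (e-1)) * y := by ring
    rw [← h1, h2, h5, abs_mul, abs_of_pos hy]
  have hseq : ∀ N : ℕ, ∃ y : ℝ, ((N:ℝ) + 1) < y ∧
      |iteratedDeriv a f y * iteratedDeriv (a + 1) f y * (y:ℝ) ^ e| < 1/((N:ℝ)+1) := by
    intro N
    by_contra hcon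
    push_neg at hcon
    -- the function c/y would be integrable on Ioi (N+1), contradiction
    have hNpos : (0:ℝ) < (N:ℝ) + 1 := by positivity
    have hPint : IntegrableOn
        (fun y : ℝ => |iteratedDeriv a f y / y ^ (n - a)|
          * |iteratedDeriv (a + 1) f y / y ^ (n - (a+1))|) (Ioi ((N:ℝ)+1)) :=
      (hprod a (a + 1) (by omega) (by omega)).mono_set
        (Ioi_subset_Ioi (by positivity))
    have hcy : IntegrableOn (fun y : ℝ => (1/((N:ℝ)+1)) * y⁻¹) (Ioi ((N:ℝ)+1)) := by
      apply Integrable.mono' hPint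
        ((measurable_const.fun_mul measurable_inv).aestronglyMeasurable)
      filter_upwards [ae_restrict_mem measurableSet_Ioi] with y hy
      have hy0 : (0:ℝ) < y := lt_trans hNpos hy
      rw [Real.norm_of_nonneg (by positivity)]
      have h3 := hcon y hy
      rw [hHfun y hy0] at h3
      rw [← div_eq_mul_inv, div_le_iff₀ hy0]
      exact h3
    have hinv : IntegrableOn (fun y : ℝ => y⁻¹) (Ioi ((N:ℝ)+1)) := by
      have h5 := hcy.const_mul ((N:ℝ)+1)
      have heqf : (fun y : ℝ => ((N:ℝ)+1) * ((1/((N:ℝ)+1)) * y⁻¹)) = fun y : ℝ => y⁻¹ := by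
        funext y
        rw [← mul_assoc, mul_one_div_cancel (ne_of_gt hNpos), one_mul]
      rwa [heqf] at h5
    have h6 : IntegrableOn (fun x : ℝ => x ^ (-1:ℝ)) (Ioi ((N:ℝ)+1)) := by
      apply (integrableOn_congr_fun ?_ measurableSet_Ioi).mpr hinv
      intro x _
      show x ^ (-1:ℝ) = x⁻¹
      rw [show (-1:ℝ) = ((-1:ℤ):ℝ) by norm_num, Real.rpow_intCast, zpow_neg_one]
    have h7 := (integrableOn_Ioi_rpow_iff hNpos).mp h6
    linarith
  choose Rs hR1 hR2 using hseq
  have hRge : ∀ N : ℕ, (N:ℝ) ≤ Rs N := fun N => le_of_lt (lt_of_le_of_lt (by linarith) (hR1 N))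
  have hRone : ∀ N : ℕ, 1 ≤ Rs N := by
    intro N
    have h1 : (1:ℝ) ≤ (N:ℝ) + 1 := by
      have := Nat.cast_nonneg (α := ℝ) N
      linarith
    exact le_of_lt (lt_of_le_of_lt h1 (hR1 N))
  have hH0 : Tendsto (fun N : ℕ =>
      |iteratedDeriv a f (Rs N) * iteratedDeriv (a + 1) f (Rs N) * (Rs N : ℝ) ^ e|)
      atTop (nhds 0) :=
    squeeze_zero (fun N => abs_nonneg _) (fun N => (hR2 N).le)
      tendsto_one_div_add_atTop_nhds_zero_nat
  have hchain : ∀ N : ℕ, ∫ y in Ioc (1/((N:ℝ)+1)) ((N:ℝ)+1), F n f (a + 1) y ≤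
      |iteratedDeriv a f (Rs N) * iteratedDeriv (a + 1) f (Rs N) * (Rs N : ℝ) ^ e|
        + M ^ 2 * (1/((N:ℝ)+1)) + C1 + 2 * n * C2 := by
    intro N
    have hNpos : (0:ℝ) < (N:ℝ) + 1 := by positivity
    have hεpos : (0:ℝ) < 1/((N:ℝ)+1) := by positivity
    have hε1 : 1/((N:ℝ)+1) ≤ 1 := by
      rw [div_le_one hNpos]
      linarith [Nat.cast_nonneg (α := ℝ) N]
    have hsub : Ioc (1/((N:ℝ)+1)) ((N:ℝ)+1) ⊆ Ioc (1/((N:ℝ)+1)) (Rs N) :=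
      Ioc_subset_Ioc_right (hR1 N).le
    have hmon : ∫ y in Ioc (1/((N:ℝ)+1)) ((N:ℝ)+1), F n f (a + 1) y ≤
        ∫ y in Ioc (1/((N:ℝ)+1)) (Rs N), F n f (a + 1) y := by
      apply setIntegral_mono_set
        ((hAll (a + 1) (by omega)).mono_set
          (fun y hy => lt_trans hεpos hy.1))
        (Eventually.of_forall fun y => F_nonneg n f (a + 1) y)
        (HasSubset.Subset.eventuallyLE hsub)
    exact hmon.trans (hbound (1/((N:ℝ)+1)) (Rs N) hεpos hε1 (hRone N))
  have htd := tends_Q n f (a + 1) (hAll (a + 1) (by omega))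
  have hrhs : Tendsto (fun N : ℕ =>
      |iteratedDeriv a f (Rs N) * iteratedDeriv (a + 1) f (Rs N) * (Rs N : ℝ) ^ e|
        + M ^ 2 * (1/((N:ℝ)+1)) + C1 + 2 * n * C2) atTop
      (nhds (0 + M ^ 2 * 0 + C1 + 2 * n * C2)) := by
    apply Tendsto.add _ tendsto_const_nhds
    apply Tendsto.add _ tendsto_const_nhds
    exact hH0.add (tendsto_const_nhds.mul tendsto_one_div_add_atTop_nhds_zero_nat)
  have hfin := le_of_tendsto_of_tendsto' htd hrhs hchain
  rw [Real.sqrt_mul (Q_nonneg n f a), Real.sqrt_mul (Q_nonneg n f a)]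
  rw [← hC1, ← hC2]
  simpa using hfin

end Stmt19Aux

open Stmt19Aux in
/-- weighted Gagliardo–Nirenberg interpolation away from the origin. -/
theorem stmt19 (n i : ℕ) (hn : 2 ≤ n) (hi1 : 1 ≤ i) (hin : i < n)
    (ystar : ℝ) (hystar : 0 < ystar) :
    ∃ C : ℝ, 0 < C ∧ ∀ f : ℝ → ℝ, ContDiff ℝ n f →
      (∀ j ≤ n, MemLp (iteratedDeriv j f) 2 (volume.restrict (Set.Ioi (0:ℝ)))) →
      (∀ j < n, iteratedDeriv j f 0 = 0) →
      (∫ y in Set.Ioi ystar, (iteratedDeriv i f y / y ^ (n - i)) ^ 2) ^ ((1:ℝ)/2)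
        ≤ C * ((∫ y in Set.Ioi (0:ℝ), (f y / y ^ n) ^ 2) ^ ((1:ℝ)/2))
                ^ (1 - (i : ℝ) / (n : ℝ))
            * ((∫ y in Set.Ioi (0:ℝ), (iteratedDeriv n f y) ^ 2) ^ ((1:ℝ)/2))
                ^ ((i : ℝ) / (n : ℝ)) := by
  have hn1 : 1 ≤ n := by omega
  have hn0 : (0:ℝ) < n := by exact_mod_cast hn1
  set K : ℝ := 1 + 4 * n with hKdef
  have hK1 : 1 ≤ K := by
    have h : (0:ℝ) ≤ 4 * n := by positivity
    rw [hKdef]; linarith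
  have hK0 : (0:ℝ) < K := lt_of_lt_of_le one_pos hK1
  refine ⟨K ^ (n * n), by positivity, ?_⟩
  intro f hf hL2 hzero
  obtain ⟨M, hM, hT⟩ := taylor_bd n f hf hzero
  have hFn : IntegrableOn (F n f n) (Ioi 0) := by
    have h1 := hL2 n le_rfl
    have h2 : Integrable (fun y => (iteratedDeriv n f y) ^ 2) (volume.restrict (Ioi (0:ℝ))) :=
      (memLp_two_iff_integrable_sq
        (hf.continuous_iteratedDeriv n le_rfl).measurable.aestronglyMeasurable).mp h1
    have heqf : F n f n = fun y => (iteratedDeriv n f y) ^ 2 := by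
      funext y
      simp [F, Nat.sub_self]
    rwa [heqf]
  have hchain : ∀ k : ℕ, k ≤ n → IntegrableOn (F n f (n - k)) (Ioi 0) := by
    intro k
    induction k with
    | zero => intro _; simpa using hFn
    | succ l ih =>
      intro hl
      have h1 := ih (by omega)
      have h2 : n - (l + 1) < n := by omega
      have h3 : n - (l + 1) + 1 = n - l := by omega
      exact (hardy_step n f hf (n - (l + 1)) h2 M hM hT (by rwa [h3])).1
  have hAll : ∀ j ≤ n, IntegrableOn (F n f j) (Ioi 0) := by
    intro j hj
    have h := hchain (n - j) (by omega)
    rwa [show n - (n - j) = j by omega] at h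
  have h4Q : ∀ j, j < n → Q n f j ≤ 4 * Q n f (j + 1) :=
    fun j hj => (hardy_step n f hf j hj M hM hT (hAll (j + 1) (by omega))).2
  have hQK : ∀ j, 1 ≤ j → j < n → Q n f j ≤ K * Real.sqrt (Q n f (j - 1) * Q n f (j + 1)) := by
    intro j hj1 hjn
    obtain ⟨a, rfl⟩ : ∃ a, j = a + 1 := ⟨j - 1, by omega⟩
    have hibp := ibp_step n f hf a (by omega) M hM hT hAll
    have h1 : Real.sqrt (Q n f a * Q n f (a + 1)) ≤ 2 * Real.sqrt (Q n f a * Q n f (a + 2)) := by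
      have h2 : Q n f a * Q n f (a + 1) ≤ Q n f a * (4 * Q n f (a + 2)) :=
        mul_le_mul_of_nonneg_left (h4Q (a + 1) (by omega)) (Q_nonneg n f a)
      calc Real.sqrt (Q n f a * Q n f (a + 1))
          ≤ Real.sqrt (Q n f a * (4 * Q n f (a + 2))) := Real.sqrt_le_sqrt h2
        _ = 2 * Real.sqrt (Q n f a * Q n f (a + 2)) := by
            rw [show Q n f a * (4 * Q n f (a + 2)) = 2 ^ 2 * (Q n f a * Q n f (a + 2)) by ring,
              Real.sqrt_mul (by positivity), Real.sqrt_sq (by norm_num : (0:ℝ) ≤ 2)]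
    have hsimp : a + 1 - 1 = a := by omega
    rw [hsimp]
    calc Q n f (a + 1)
        ≤ Real.sqrt (Q n f a * Q n f (a + 2))
            + 2 * n * Real.sqrt (Q n f a * Q n f (a + 1)) := hibp
      _ ≤ Real.sqrt (Q n f a * Q n f (a + 2))
            + 2 * n * (2 * Real.sqrt (Q n f a * Q n f (a + 2))) := by
          have h3 := mul_le_mul_of_nonneg_left h1 (by positivity : (0:ℝ) ≤ 2 * n)
          linarith
      _ = (1 + 4 * n) * Real.sqrt (Q n f a * Q n f (a + 2)) := by ring
      _ = K * Real.sqrt (Q n f a * Q n f (a + 2)) := by rw [hKdef]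
  have hseq := seq_main n hn1 K hK1 (Q n f) (fun j _ => Q_nonneg n f j) hQK i (le_of_lt hin)
  have hQ0 : Q n f 0 = ∫ y in Set.Ioi (0:ℝ), (f y / y ^ n) ^ 2 := by
    simp only [Q, F, iteratedDeriv_zero, Nat.sub_zero]
  have hQn : Q n f n = ∫ y in Set.Ioi (0:ℝ), (iteratedDeriv n f y) ^ 2 := by
    apply setIntegral_congr_fun measurableSet_Ioi
    intro y _
    simp [F, Nat.sub_self]
  have hLHS : (∫ y in Set.Ioi ystar, (iteratedDeriv i f y / y ^ (n - i)) ^ 2) ^ ((1:ℝ)/2)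
      ≤ (Q n f i) ^ ((1:ℝ)/2) := by
    apply Real.rpow_le_rpow (setIntegral_nonneg measurableSet_Ioi fun y _ => sq_nonneg _)
      _ (by norm_num)
    exact setIntegral_mono_set (hAll i hin.le) (Eventually.of_forall (F_nonneg n f i))
      (HasSubset.Subset.eventuallyLE fun y hy => lt_trans hystar hy)
  have hθ0 : (0:ℝ) ≤ (i:ℝ) / n := by positivity
  have hθ1 : (0:ℝ) ≤ 1 - (i:ℝ) / n := by
    rw [sub_nonneg, div_le_one hn0]
    exact_mod_cast hin.le
  have hQi12 : (Q n f i) ^ ((1:ℝ)/2)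
      ≤ (K ^ (n * n) * Q n f 0 ^ (1 - (i:ℝ)/n) * Q n f n ^ ((i:ℝ)/n)) ^ ((1:ℝ)/2) :=
    Real.rpow_le_rpow (Q_nonneg n f i) hseq (by norm_num)
  have hexp : (K ^ (n * n) * Q n f 0 ^ (1 - (i:ℝ)/n) * Q n f n ^ ((i:ℝ)/n)) ^ ((1:ℝ)/2)
      = (K ^ (n * n)) ^ ((1:ℝ)/2) * ((Q n f 0) ^ ((1:ℝ)/2)) ^ (1 - (i:ℝ)/n)
          * ((Q n f n) ^ ((1:ℝ)/2)) ^ ((i:ℝ)/n) := by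
    rw [Real.mul_rpow (mul_nonneg (by positivity) (Real.rpow_nonneg (Q_nonneg n f 0) _))
        (Real.rpow_nonneg (Q_nonneg n f n) _),
      Real.mul_rpow (by positivity) (Real.rpow_nonneg (Q_nonneg n f 0) _)]
    congr 1
    · congr 1
      rw [← Real.rpow_mul (Q_nonneg n f 0), ← Real.rpow_mul (Q_nonneg n f 0), mul_comm]
    · rw [← Real.rpow_mul (Q_nonneg n f n), ← Real.rpow_mul (Q_nonneg n f n), mul_comm]
  have hKK : ((K ^ (n * n) : ℝ)) ^ ((1:ℝ)/2) ≤ K ^ (n * n) := by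
    have h1 : (1:ℝ) ≤ K ^ (n * n) := one_le_pow₀ hK1
    calc ((K ^ (n * n) : ℝ)) ^ ((1:ℝ)/2) ≤ ((K ^ (n * n) : ℝ)) ^ (1:ℝ) :=
        Real.rpow_le_rpow_of_exponent_le h1 (by norm_num)
      _ = K ^ (n * n) := Real.rpow_one _
  rw [← hQ0, ← hQn]
  refine hLHS.trans (hQi12.trans ?_)
  rw [hexp]
  have hB : (0:ℝ) ≤ ((Q n f 0) ^ ((1:ℝ)/2)) ^ (1 - (i:ℝ)/n) :=
    Real.rpow_nonneg (Real.rpow_nonneg (Q_nonneg n f 0) _) _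
  have hC : (0:ℝ) ≤ ((Q n f n) ^ ((1:ℝ)/2)) ^ ((i:ℝ)/n) :=
    Real.rpow_nonneg (Real.rpow_nonneg (Q_nonneg n f n) _) _
  exact mul_le_mul_of_nonneg_right (mul_le_mul_of_nonneg_right hKK hB) hC
end
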